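/- arXiv:0904.1097 — 3 statements merged into one kernel-verified Lean document; each statement's English description precedes it below -/
import Mathlib

section
/- For every positive integer n and all subsets O, C of [n] = {1,…,n}, the pair (O,C) satisfies |O| = |C| and |O ∩ [k]| ≥ |C ∩ [k+1]| for all k ∈ {0,1,…,n−1} if and only if there exists a set partition 𝓑 of [n] with op(𝓑) = O and cl(𝓑) = C. -/
open scoped Classical
noncomputable section

/-! ### Set partitions of type A -/

/-- A set partition of `[n] = {1,…,n}`: pairwise disjoint nonempty blocks covering `[n]`. -/
structure SetPartitionA (n : ℕ) where
  blocks : Finset (Finset ℕ)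
  nonempty : ∀ B ∈ blocks, B.Nonempty
  disj : ∀ B ∈ blocks, ∀ B' ∈ blocks, B ≠ B' → Disjoint B B'
  cover : ∀ i : ℕ, (∃ B ∈ blocks, i ∈ B) ↔ i ∈ Finset.Icc 1 n

/-- Two arcs `(i,j)`, `(i',j')` cross if `i<i'<j<j'` (in either order of the two arcs). -/
def ACross (a b : ℕ × ℕ) : Prop :=
  (a.1 < b.1 ∧ b.1 < a.2 ∧ a.2 < b.2) ∨ (b.1 < a.1 ∧ a.1 < b.2 ∧ b.2 < a.2)

/-- Two arcs `(i,j)`, `(i',j')` nest if `i<i'<j'<j` (in either order of the two arcs). -/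
def ANest (a b : ℕ × ℕ) : Prop :=
  (a.1 < b.1 ∧ b.1 < b.2 ∧ b.2 < a.2) ∨ (b.1 < a.1 ∧ a.1 < a.2 ∧ a.2 < b.2)

namespace SetPartitionA

variable {n : ℕ}

/-- Openers: elements of `[n]` that are not the maximum of their block. -/
def openers (P : SetPartitionA n) : Finset ℕ :=
  (Finset.Icc 1 n).filter fun i => ∃ B ∈ P.blocks, i ∈ B ∧ ∃ j ∈ B, i < j

/-- Closers: elements of `[n]` that are not the minimum of their block. -/
def closers (P : SetPartitionA n) : Finset ℕ :=
  (Finset.Icc 1 n).filter fun i => ∃ B ∈ P.blocks, i ∈ B ∧ ∃ j ∈ B, j < i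

/-- `(i,j)` is an arc: `i < j` are in the same block with no block element in between. -/
def IsArc (P : SetPartitionA n) (i j : ℕ) : Prop :=
  i < j ∧ ∃ B ∈ P.blocks, i ∈ B ∧ j ∈ B ∧ ∀ k ∈ B, ¬(i < k ∧ k < j)

/-- The finite set of arcs of `P`. -/
def arcs (P : SetPartitionA n) : Finset (ℕ × ℕ) :=
  ((Finset.Icc 1 n) ×ˢ (Finset.Icc 1 n)).filter fun p => P.IsArc p.1 p.2

/-- The number of crossings: pairs of arcs `(i,j)`, `(i',j')` with `i<i'<j<j'`. -/
def crossings (P : SetPartitionA n) : ℕ :=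
  ((P.arcs ×ˢ P.arcs).filter fun q =>
    q.1.1 < q.2.1 ∧ q.2.1 < q.1.2 ∧ q.1.2 < q.2.2).card

/-- The number of nestings: pairs of arcs `(i,j)`, `(i',j')` with `i<i'<j'<j`. -/
def nestings (P : SetPartitionA n) : ℕ :=
  ((P.arcs ×ˢ P.arcs).filter fun q =>
    q.1.1 < q.2.1 ∧ q.2.1 < q.2.2 ∧ q.2.2 < q.1.2).card

/-- The cardinality of a maximal crossing: largest set of mutually crossing arcs. -/
def maxCrossing (P : SetPartitionA n) : ℕ :=
  (P.arcs.powerset.filter fun S => ∀ a ∈ S, ∀ b ∈ S, a ≠ b → ACross a b).sup Finset.card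

/-- The cardinality of a maximal nesting: largest set of mutually nesting arcs. -/
def maxNesting (P : SetPartitionA n) : ℕ :=
  (P.arcs.powerset.filter fun S => ∀ a ∈ S, ∀ b ∈ S, a ≠ b → ANest a b).sup Finset.card

end SetPartitionA

/-! ### Set partitions of classical types B/C/D on `[±n]` -/

/-- Position of `i ∈ [±n]` in the type `C` nesting order `1<⋯<n<-n<⋯<-1`. -/
def nestOrd (n : ℕ) (i : ℤ) : ℤ := if 0 < i then i else 2 * n + 1 + i

/-- Position of `i ∈ [±n]` in the crossing order `1<⋯<n<-1<⋯<-n`. -/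
def crossOrd (n : ℕ) (i : ℤ) : ℤ := if 0 < i then i else (n : ℤ) - i

/-- Position of `i ∈ [±n] ∪ {0}` in the type `B` nesting order `1<⋯<n<0<-n<⋯<-1`. -/
def nestOrdB (n : ℕ) (i : ℤ) : ℤ :=
  if 0 < i then i else if i = 0 then (n : ℤ) + 1 else 2 * n + 2 + i

/-- The negative `-B` of a block. -/
def negSet (B : Finset ℤ) : Finset ℤ := B.image fun x => -x

/-- A set partition of type `B_n`/`C_n`: a set partition of `[±n]` with `B ∈ 𝓑 ↔ -B ∈ 𝓑`
and at most one block `B₀` with `B₀ = -B₀`. -/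
structure SetPartitionC (n : ℕ) where
  blocks : Finset (Finset ℤ)
  nonempty : ∀ B ∈ blocks, B.Nonempty
  disj : ∀ B ∈ blocks, ∀ B' ∈ blocks, B ≠ B' → Disjoint B B'
  cover : ∀ i : ℤ, (∃ B ∈ blocks, i ∈ B) ↔ (i ≠ 0 ∧ |i| ≤ (n : ℤ))
  symm : ∀ B ∈ blocks, negSet B ∈ blocks
  zeroBlock : ∀ B ∈ blocks, ∀ B' ∈ blocks, negSet B = B → negSet B' = B' → B = B'

/-- Endpoints of an arc, ordered by the crossing order. -/
def cpr (n : ℕ) (p : ℤ × ℤ) : ℤ × ℤ :=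
  (min (crossOrd n p.1) (crossOrd n p.2), max (crossOrd n p.1) (crossOrd n p.2))

/-- `p` crosses `q` with `p` coming first in the crossing order. -/
def CrossRel (n : ℕ) (p q : ℤ × ℤ) : Prop :=
  (cpr n p).1 < (cpr n q).1 ∧ (cpr n q).1 < (cpr n p).2 ∧ (cpr n p).2 < (cpr n q).2

/-- The two arcs `p`, `q` cross in the crossing diagram. -/
def Crosses (n : ℕ) (p q : ℤ × ℤ) : Prop := CrossRel n p q ∨ CrossRel n q p

/-- `p` nests over `q` in the nesting diagram (arcs written in nesting order). -/
def NestRel (n : ℕ) (p q : ℤ × ℤ) : Prop :=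
  nestOrd n p.1 < nestOrd n q.1 ∧ nestOrd n q.2 < nestOrd n p.2

/-- The two arcs `p`, `q` nest in the nesting diagram. -/
def Nests (n : ℕ) (p q : ℤ × ℤ) : Prop := NestRel n p q ∨ NestRel n q p

/-- `p` nests over `q` in the type `B` nesting diagram. -/
def NestRelB (n : ℕ) (p q : ℤ × ℤ) : Prop :=
  nestOrdB n p.1 < nestOrdB n q.1 ∧ nestOrdB n q.2 < nestOrdB n p.2

/-- The two arcs `p`, `q` nest in the type `B` nesting diagram. -/
def NestsB (n : ℕ) (p q : ℤ × ℤ) : Prop := NestRelB n p q ∨ NestRelB n q p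

/-- Exceptional pairs for type `B` crossings: both arcs have positive opener and negative
closer, and at least one closer is smaller in absolute value than its opener. -/
def ExcCross (p q : ℤ × ℤ) : Prop :=
  0 < p.1 ∧ p.2 < 0 ∧ 0 < q.1 ∧ q.2 < 0 ∧ (|p.2| < |p.1| ∨ |q.2| < |q.1|)

/-- Exceptional pairs for type `B` nestings: both arcs have positive opener (or begin at `0`)
and negative closer (or end at `0`), and at least one closer is smaller in absolute value
than its opener. -/
def ExcNest (p q : ℤ × ℤ) : Prop :=
  0 ≤ p.1 ∧ p.2 ≤ 0 ∧ 0 ≤ q.1 ∧ q.2 ≤ 0 ∧ (|p.2| < |p.1| ∨ |q.2| < |q.1|)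

/-- A block augmented by `0` if it is the zero block. -/
def augB (B : Finset ℤ) : Finset ℤ := if negSet B = B then insert 0 B else B

/-- The arc `p` contains `n`. -/
def ContainsN (n : ℕ) (p : ℤ × ℤ) : Prop := p.1 = (n : ℤ) ∨ p.2 = (n : ℤ)

/-- The arc `p` contains `-n`. -/
def ContainsNegN (n : ℕ) (p : ℤ × ℤ) : Prop := p.1 = -(n : ℤ) ∨ p.2 = -(n : ℤ)

namespace SetPartitionC

variable {n : ℕ}

/-- The ground set `[±n]` as a finset of integers. -/
def pmn (n : ℕ) : Finset ℤ := (Finset.Icc (-(n : ℤ)) (n : ℤ)).erase 0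

/-- `(i,j)` is an arc: `i`, `j` are consecutive elements of a block in the nesting order. -/
def IsArc (P : SetPartitionC n) (i j : ℤ) : Prop :=
  nestOrd n i < nestOrd n j ∧ ∃ B ∈ P.blocks, i ∈ B ∧ j ∈ B ∧
    ∀ k ∈ B, ¬(nestOrd n i < nestOrd n k ∧ nestOrd n k < nestOrd n j)

/-- The finite set of arcs of `P` (written in nesting order). -/
def arcs (P : SetPartitionC n) : Finset (ℤ × ℤ) :=
  (pmn n ×ˢ pmn n).filter fun p => P.IsArc p.1 p.2

/-- Openers: positive elements that are not maximal in their block w.r.t. the nesting order. -/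
def openers (P : SetPartitionC n) : Finset ℤ :=
  (Finset.Icc 1 (n : ℤ)).filter fun i =>
    ∃ B ∈ P.blocks, i ∈ B ∧ ∃ j ∈ B, nestOrd n i < nestOrd n j

/-- Closers: positive elements that are not minimal in their block w.r.t. the nesting order. -/
def closers (P : SetPartitionC n) : Finset ℤ :=
  (Finset.Icc 1 (n : ℤ)).filter fun i =>
    ∃ B ∈ P.blocks, i ∈ B ∧ ∃ j ∈ B, nestOrd n j < nestOrd n i

/-- The number of crossings of a type `C` set partition. -/
def crossings (P : SetPartitionC n) : ℕ :=
  ((P.arcs ×ˢ P.arcs).filter fun q => CrossRel n q.1 q.2).card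

/-- The number of nestings of a type `C` set partition. -/
def nestings (P : SetPartitionC n) : ℕ :=
  ((P.arcs ×ˢ P.arcs).filter fun q => NestRel n q.1 q.2).card

/-- The number of crossings among pairs of arcs that both have positive opener. -/
def crossingsPos (P : SetPartitionC n) : ℕ :=
  (((P.arcs.filter fun p => 0 < p.1) ×ˢ (P.arcs.filter fun p => 0 < p.1)).filter
    fun q => CrossRel n q.1 q.2).card

/-- The number of nestings among pairs of arcs that both have positive opener. -/
def nestingsPos (P : SetPartitionC n) : ℕ :=
  (((P.arcs.filter fun p => 0 < p.1) ×ˢ (P.arcs.filter fun p => 0 < p.1)).filter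
    fun q => NestRel n q.1 q.2).card

/-- The cardinality of a maximal crossing. -/
def maxCrossing (P : SetPartitionC n) : ℕ :=
  (P.arcs.powerset.filter fun S => ∀ a ∈ S, ∀ b ∈ S, a ≠ b → Crosses n a b).sup Finset.card

/-- The cardinality of a maximal nesting. -/
def maxNesting (P : SetPartitionC n) : ℕ :=
  (P.arcs.powerset.filter fun S => ∀ a ∈ S, ∀ b ∈ S, a ≠ b → Nests n a b).sup Finset.card

/-! ### Type B notions -/

/-- `(i,j)` is a type `B` nesting arc: consecutive elements of an augmented block in the
type `B` nesting order. -/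
def IsArcB (P : SetPartitionC n) (i j : ℤ) : Prop :=
  nestOrdB n i < nestOrdB n j ∧ ∃ B ∈ P.blocks, i ∈ augB B ∧ j ∈ augB B ∧
    ∀ k ∈ augB B, ¬(nestOrdB n i < nestOrdB n k ∧ nestOrdB n k < nestOrdB n j)

/-- The finite set of type `B` nesting arcs of `P`. -/
def arcsB (P : SetPartitionC n) : Finset (ℤ × ℤ) :=
  ((insert 0 (pmn n)) ×ˢ (insert 0 (pmn n))).filter fun p => P.IsArcB p.1 p.2

/-- The number of type `B` crossings. -/
def crossingsB (P : SetPartitionC n) : ℕ :=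
  ((P.arcs ×ˢ P.arcs).filter fun q => CrossRel n q.1 q.2 ∧ ¬ExcCross q.1 q.2).card

/-- The number of type `B` nestings. -/
def nestingsB (P : SetPartitionC n) : ℕ :=
  ((P.arcsB ×ˢ P.arcsB).filter fun q => NestRelB n q.1 q.2 ∧ ¬ExcNest q.1 q.2).card

/-- Openers in type `B`: positive elements not maximal in their block
w.r.t. the type `B` nesting order. -/
def openersB (P : SetPartitionC n) : Finset ℤ :=
  (Finset.Icc 1 (n : ℤ)).filter fun i =>
    ∃ B ∈ P.blocks, i ∈ B ∧ ∃ j ∈ B, nestOrdB n i < nestOrdB n j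

/-- Closers in type `B`: positive elements not minimal in their block
w.r.t. the type `B` nesting order. -/
def closersB (P : SetPartitionC n) : Finset ℤ :=
  (Finset.Icc 1 (n : ℤ)).filter fun i =>
    ∃ B ∈ P.blocks, i ∈ B ∧ ∃ j ∈ B, nestOrdB n j < nestOrdB n i

/-- The cardinality of a maximal type `B` crossing. -/
def maxCrossingB (P : SetPartitionC n) : ℕ :=
  (P.arcs.powerset.filter fun S =>
    ∀ a ∈ S, ∀ b ∈ S, a ≠ b → Crosses n a b ∧ ¬ExcCross a b).sup Finset.card

/-- The cardinality of a maximal type `B` nesting. -/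
def maxNestingB (P : SetPartitionC n) : ℕ :=
  (P.arcsB.powerset.filter fun S =>
    ∀ a ∈ S, ∀ b ∈ S, a ≠ b → NestsB n a b ∧ ¬ExcNest a b).sup Finset.card

/-! ### Type D notions -/

/-- A type `C` set partition is of type `D` if the zero block, when present, is not a single
pair `{i,-i}`. -/
def IsTypeD (P : SetPartitionC n) : Prop :=
  ∀ B ∈ P.blocks, negSet B = B → B.card ≠ 2

/-- The arcs starting in `{1,…,n-1}` and ending in the negative of an element of `{1,…,n-1}`. -/
def pnArcs (P : SetPartitionC n) : Finset (ℤ × ℤ) :=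
  P.arcs.filter fun p => 0 < p.1 ∧ p.1 < (n : ℤ) ∧ -(n : ℤ) < p.2 ∧ p.2 < 0

/-- The index `l` of an arc `a = (i_l, -j_l)` in the list of `pnArcs` ordered by openers. -/
def dRank (P : SetPartitionC n) (a : ℤ × ℤ) : ℕ :=
  (P.pnArcs.filter fun b => b.1 ≤ a.1).card

/-- The crossings allowed in a non-crossing set partition of type `D`. -/
def AllowedCrossD (P : SetPartitionC n) (p q : ℤ × ℤ) : Prop :=
  (ContainsN n p ∧ q ∈ P.pnArcs ∧ P.pnArcs.card < 2 * P.dRank q) ∨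
  (ContainsN n q ∧ p ∈ P.pnArcs ∧ P.pnArcs.card < 2 * P.dRank p) ∨
  (ContainsNegN n p ∧ q ∈ P.pnArcs ∧ 2 * P.dRank q ≤ P.pnArcs.card) ∨
  (ContainsNegN n q ∧ p ∈ P.pnArcs ∧ 2 * P.dRank p ≤ P.pnArcs.card) ∨
  (ContainsN n p ∧ ContainsNegN n q) ∨
  (ContainsN n q ∧ ContainsNegN n p)

/-- `P` is a non-crossing set partition of type `D_n`. -/
def NonCrossingD (P : SetPartitionC n) : Prop :=
  (∀ i : ℤ, 0 < i → P.IsArc i (-i) → i = n) ∧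
  (∀ p ∈ P.arcs, ∀ q ∈ P.arcs, Crosses n p q → P.AllowedCrossD p q) ∧
  (∀ p ∈ P.arcs, ContainsN n p →
    ∀ q ∈ P.pnArcs, P.pnArcs.card < 2 * P.dRank q → Crosses n p q) ∧
  (∀ p ∈ P.arcs, ContainsNegN n p →
    ∀ q ∈ P.pnArcs, 2 * P.dRank q ≤ P.pnArcs.card → Crosses n p q)

/-- The nestings (`p` over `q`) allowed in a non-nesting set partition of type `D`. -/
def AllowedNestD (P : SetPartitionC n) (p q : ℤ × ℤ) : Prop :=
  (0 < p.1 ∧ p.1 < q.1 ∧ q.1 < (n : ℤ) ∧ p.2 = -(n : ℤ) ∧ q.2 = (n : ℤ)) ∨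
  (q.1 = (n : ℤ) ∧ q.2 = -(n : ℤ) ∧ 0 < p.1 ∧ p.1 < (n : ℤ) ∧ -(n : ℤ) < p.2 ∧ p.2 < 0 ∧
    ∃ m : ℤ, 0 < m ∧ m < p.1 ∧ m < -p.2 ∧ P.IsArc m (n : ℤ))

/-- `P` is a non-nesting set partition of type `D_n`. -/
def NonNestingD (P : SetPartitionC n) : Prop :=
  (∀ i : ℤ, 0 < i → P.IsArc i (-i) → i = n) ∧
  (∀ p ∈ P.arcs, ∀ q ∈ P.arcs, NestRel n p q → P.AllowedNestD p q)

end SetPartitionC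

/-! ### The staircase polyomino and chains in fillings -/

/-- The cells of the staircase polyomino `P_n`: `(c,r)` with `1 ≤ c ≤ n`, `c ≤ r ≤ 2n-1`. -/
def cellsP (n : ℕ) : Finset (ℕ × ℕ) :=
  ((Finset.Icc 1 n) ×ˢ (Finset.Icc 1 (2 * n - 1))).filter fun p => p.1 ≤ p.2

/-- The length of the longest north-east chain among a set of (nonzero) cells:
columns strictly increase while rows strictly decrease. -/
def neLen (S : Finset (ℕ × ℕ)) : ℕ :=
  (S.powerset.filter fun T =>
    ∀ a ∈ T, ∀ b ∈ T, a ≠ b →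
      (a.1 < b.1 ∧ b.2 < a.2) ∨ (b.1 < a.1 ∧ a.2 < b.2)).sup Finset.card

/-- The length of the longest south-east chain among a set of (nonzero) cells:
columns and rows strictly increase, and the surrounding rectangle lies in the polyomino
(`a.1 ≤ b.2` for all cells `a`, `b` of the chain). -/
def seLen (S : Finset (ℕ × ℕ)) : ℕ :=
  (S.powerset.filter fun T =>
    (∀ a ∈ T, ∀ b ∈ T, a ≠ b →
      (a.1 < b.1 ∧ a.2 < b.2) ∨ (b.1 < a.1 ∧ b.2 < a.2)) ∧
    ∀ a ∈ T, ∀ b ∈ T, a.1 ≤ b.2).sup Finset.card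

namespace SetPartitionC

variable {n : ℕ}

/-- The cells filled with `1` in the nesting filling of the staircase polyomino: rows are
labelled from top to bottom by `2,…,n,-n,…,-1`; the cell in column `i` and row labelled `j`
is filled iff `(i,j)` is an arc with positive opener `i`. -/
def nestFill (P : SetPartitionC n) : Finset (ℕ × ℕ) :=
  (cellsP n).filter fun c => ∃ j : ℤ, P.IsArc (c.1 : ℤ) j ∧ nestOrd n j = (c.2 : ℤ) + 1

/-- The cells filled with `1` in the crossing filling of the staircase polyomino: rows are
labelled from top to bottom by `2,…,n,-1,…,-n`; the cell in column `i` and row labelled `j`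
is filled iff `(i,j)` is an arc with positive opener `i`. -/
def crossFill (P : SetPartitionC n) : Finset (ℕ × ℕ) :=
  (cellsP n).filter fun c => ∃ j : ℤ, P.IsArc (c.1 : ℤ) j ∧ crossOrd n j = (c.2 : ℤ) + 1

end SetPartitionC

/-! ### Triangulations of the symmetric 2n-gon and symmetric fans of Dyck paths -/

/-- `p` is a diagonal of the `2n`-gon with vertices labelled by `[±n]`, written with its two
(distinct) endpoints in crossing order. -/
def IsDiag (n : ℕ) (p : ℤ × ℤ) : Prop :=
  p.1 ≠ 0 ∧ p.2 ≠ 0 ∧ |p.1| ≤ (n : ℤ) ∧ |p.2| ≤ (n : ℤ) ∧ crossOrd n p.1 < crossOrd n p.2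

/-- Normalize a pair so that its endpoints are in crossing order. -/
def normD (n : ℕ) (p : ℤ × ℤ) : ℤ × ℤ :=
  if crossOrd n p.1 < crossOrd n p.2 then p else (p.2, p.1)

/-- `ω` contains `m` mutually crossing diagonals. -/
def HasMCross (n m : ℕ) (ω : Finset (ℤ × ℤ)) : Prop :=
  ∃ S ⊆ ω, S.card = m ∧ ∀ a ∈ S, ∀ b ∈ S, a ≠ b → Crosses n a b

/-- A type `C_n` `k`-triangulation: a symmetric set of diagonals with no `(k+1)`-crossing,
maximal with this property. -/
def IsTriangC (n k : ℕ) (ω : Finset (ℤ × ℤ)) : Prop :=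
  (∀ p ∈ ω, IsDiag n p) ∧
  (∀ p ∈ ω, normD n (-p.1, -p.2) ∈ ω) ∧
  ¬HasMCross n (k + 1) ω ∧
  ∀ d : ℤ × ℤ, IsDiag n d → d ∉ ω → HasMCross n (k + 1) (insert d ω)

/-- A Dyck path in the staircase polyomino starting at the top cell `(i,i)` of column `i`,
proceeding by unit south or west steps inside `P_n`, and ending on the main diagonal
`r = 2n - c`. -/
def IsDyckPath (n i : ℕ) (l : List (ℕ × ℕ)) : Prop :=
  l ≠ [] ∧ l.head? = some (i, i) ∧ (∀ c ∈ l, c ∈ cellsP n) ∧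
  l.Chain' (fun a b => (b.1 = a.1 ∧ b.2 = a.2 + 1) ∨ (b.1 + 1 = a.1 ∧ b.2 = a.2)) ∧
  ∀ c : ℕ × ℕ, l.getLast? = some c → c.2 = 2 * n - c.1

/-- A symmetric fan of `k` non-intersecting Dyck paths: the `i`-th path starts at cell
`(i,i)` and the paths are pairwise cell-disjoint. -/
def IsSymFan (n k : ℕ) (f : Fin k → List (ℕ × ℕ)) : Prop :=
  (∀ i : Fin k, IsDyckPath n ((i : ℕ) + 1) (f i)) ∧
  ∀ i j : Fin k, i ≠ j → ∀ c ∈ f i, c ∉ f j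

namespace SPAux
variable {n : ℕ}

lemma block_unique (P : SetPartitionA n) {B B' : Finset ℕ} {i : ℕ}
    (hB : B ∈ P.blocks) (hB' : B' ∈ P.blocks) (hi : i ∈ B) (hi' : i ∈ B') : B = B' := by
  by_contra h
  exact Finset.disjoint_left.mp (P.disj B hB B' hB' h) hi hi'

def blockOf (P : SetPartitionA n) (i : ℕ) : Finset ℕ :=
  (P.blocks.filter fun B => i ∈ B).sup id

lemma blockOf_eq (P : SetPartitionA n) {B : Finset ℕ} {i : ℕ}
    (hB : B ∈ P.blocks) (hi : i ∈ B) : blockOf P i = B := by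
  have h : P.blocks.filter (fun B => i ∈ B) = {B} := by
    ext B'
    simp only [Finset.mem_filter, Finset.mem_singleton]
    constructor
    · rintro ⟨hB', hi'⟩; exact (block_unique P hB' hB hi' hi)
    · rintro rfl; exact ⟨hB, hi⟩
  rw [blockOf, h, Finset.sup_singleton, id]

def predF (P : SetPartitionA n) (c : ℕ) : ℕ :=
  if h : ((blockOf P c).filter (· < c)).Nonempty then ((blockOf P c).filter (· < c)).max' h else 0

def succF (P : SetPartitionA n) (o : ℕ) : ℕ :=
  if h : ((blockOf P o).filter (o < ·)).Nonempty then ((blockOf P o).filter (o < ·)).min' h else 0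

lemma predF_spec (P : SetPartitionA n) {c j : ℕ} {B : Finset ℕ}
    (hB : B ∈ P.blocks) (hc : c ∈ B) (hj : j ∈ B) (hjc : j < c) :
    predF P c ∈ B ∧ predF P c < c ∧ ∀ s ∈ B, s < c → s ≤ predF P c := by
  have hbo : blockOf P c = B := blockOf_eq P hB hc
  have hne : ((blockOf P c).filter (· < c)).Nonempty := ⟨j, by simp [hbo, hj, hjc]⟩
  have hde : predF P c = ((blockOf P c).filter (· < c)).max' hne := dif_pos hne
  have hmem := Finset.max'_mem _ hne
  rw [← hde, hbo, Finset.mem_filter] at hmem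
  refine ⟨hmem.1, hmem.2, fun s hs hsc => ?_⟩
  have := Finset.le_max' ((blockOf P c).filter (· < c)) s (by simp [hbo, hs, hsc])
  rwa [← hde] at this

lemma succF_spec (P : SetPartitionA n) {o j : ℕ} {B : Finset ℕ}
    (hB : B ∈ P.blocks) (ho : o ∈ B) (hj : j ∈ B) (hoj : o < j) :
    succF P o ∈ B ∧ o < succF P o ∧ ∀ s ∈ B, o < s → succF P o ≤ s := by
  have hbo : blockOf P o = B := blockOf_eq P hB ho
  have hne : ((blockOf P o).filter (o < ·)).Nonempty := ⟨j, by simp [hbo, hj, hoj]⟩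
  have hde : succF P o = ((blockOf P o).filter (o < ·)).min' hne := dif_pos hne
  have hmem := Finset.min'_mem _ hne
  rw [← hde, hbo, Finset.mem_filter] at hmem
  refine ⟨hmem.1, hmem.2, fun s hs hos => ?_⟩
  have := Finset.min'_le ((blockOf P o).filter (o < ·)) s (by simp [hbo, hs, hos])
  rwa [← hde] at this

lemma mem_Icc_of_mem_block (P : SetPartitionA n) {B : Finset ℕ} {i : ℕ}
    (hB : B ∈ P.blocks) (hi : i ∈ B) : i ∈ Finset.Icc 1 n :=
  (P.cover i).mp ⟨B, hB, hi⟩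

lemma predF_maps (P : SetPartitionA n) {c : ℕ} (hc : c ∈ P.closers) :
    predF P c ∈ P.openers := by
  obtain ⟨hcI, B, hB, hcB, j, hjB, hjc⟩ := by
    simpa [SetPartitionA.closers, Finset.mem_filter] using hc
  obtain ⟨h1, h2, _⟩ := predF_spec P hB hcB hjB hjc
  refine Finset.mem_filter.mpr ⟨mem_Icc_of_mem_block P hB h1, B, hB, h1, c, hcB, h2⟩

lemma succF_maps (P : SetPartitionA n) {o : ℕ} (ho : o ∈ P.openers) :
    succF P o ∈ P.closers := by
  obtain ⟨hoI, B, hB, hoB, j, hjB, hoj⟩ := by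
    simpa [SetPartitionA.openers, Finset.mem_filter] using ho
  obtain ⟨h1, h2, _⟩ := succF_spec P hB hoB hjB hoj
  refine Finset.mem_filter.mpr ⟨mem_Icc_of_mem_block P hB h1, B, hB, h1, o, hoB, h2⟩

lemma predF_inj (P : SetPartitionA n) : Set.InjOn (predF P) P.closers := by
  intro c hc c' hc' he
  obtain ⟨hcI, B, hB, hcB, j, hjB, hjc⟩ := by
    simpa [SetPartitionA.closers, Finset.mem_filter] using hc
  obtain ⟨hcI', B', hB', hcB', j', hjB', hjc'⟩ := by
    simpa [SetPartitionA.closers, Finset.mem_filter] using hc'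
  obtain ⟨h1, h2, h3⟩ := predF_spec P hB hcB hjB hjc
  obtain ⟨h1', h2', h3'⟩ := predF_spec P hB' hcB' hjB' hjc'
  have hBB : B = B' := block_unique P hB hB' (he ▸ h1) h1'
  subst hBB
  rcases lt_trichotomy c c' with h | h | h
  · have := h3' c hcB h
    omega
  · exact h
  · have := h3 c' hcB' h
    omega

lemma succF_inj (P : SetPartitionA n) : Set.InjOn (succF P) P.openers := by
  intro c hc c' hc' he
  obtain ⟨hcI, B, hB, hcB, j, hjB, hjc⟩ := by
    simpa [SetPartitionA.openers, Finset.mem_filter] using hc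
  obtain ⟨hcI', B', hB', hcB', j', hjB', hjc'⟩ := by
    simpa [SetPartitionA.openers, Finset.mem_filter] using hc'
  obtain ⟨h1, h2, h3⟩ := succF_spec P hB hcB hjB hjc
  obtain ⟨h1', h2', h3'⟩ := succF_spec P hB' hcB' hjB' hjc'
  have hBB : B = B' := block_unique P hB hB' (he ▸ h1) h1'
  subst hBB
  rcases lt_trichotomy c c' with h | h | h
  · have := h3 c' hcB' h
    omega
  · exact h
  · have := h3' c hcB h
    omega

lemma card_openers_eq (P : SetPartitionA n) : P.openers.card = P.closers.card := by
  refine le_antisymm ?_ ?_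
  · exact Finset.card_le_card_of_injOn (succF P) (fun o ho => succF_maps P ho) (succF_inj P)
  · exact Finset.card_le_card_of_injOn (predF P) (fun c hc => predF_maps P hc) (predF_inj P)

lemma prefix_ineq (P : SetPartitionA n) (k : ℕ) :
    (P.closers ∩ Finset.Icc 1 (k + 1)).card ≤ (P.openers ∩ Finset.Icc 1 k).card := by
  refine Finset.card_le_card_of_injOn (predF P) ?_ ?_
  · intro c hcm
    rw [Finset.mem_coe, Finset.mem_inter] at hcm ⊢
    obtain ⟨hc, hck⟩ := hcm
    have h1 := predF_maps P hc
    obtain ⟨hcI, B, hB, hcB, j, hjB, hjc⟩ := by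
      simpa [SetPartitionA.closers, Finset.mem_filter] using hc
    obtain ⟨hm, hlt, _⟩ := predF_spec P hB hcB hjB hjc
    have hI := mem_Icc_of_mem_block P hB hm
    simp only [Finset.mem_Icc] at hck hI ⊢
    exact ⟨h1, hI.1, by omega⟩
  · exact fun a ha b hb => predF_inj P (Finset.mem_inter.mp ha).1 (Finset.mem_inter.mp hb).1


lemma aux_exists (n : ℕ) (hn : 0 < n) (O C : Finset ℕ)
    (hO : O ⊆ Finset.Icc 1 n) (hC : C ⊆ Finset.Icc 1 n)
    (g h : ℕ → ℕ)
    (hg1 : ∀ x ∈ O, x < g x) (hg2 : ∀ x ∈ O, g x ∈ C) (hg3 : ∀ x, x ∉ O → g x = x)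
    (hh1 : ∀ y ∈ C, h y ∈ O ∧ h y < y ∧ g (h y) = y) (hh2 : ∀ y, y ∉ C → h y = y)
    (hgh : ∀ x ∈ O, h (g x) = x) :
    ∃ P : SetPartitionA n, P.openers = O ∧ P.closers = C := by
  obtain ⟨n', rfl⟩ : ∃ m, n = m + 1 := ⟨n - 1, by omega⟩
  have hgle : ∀ x, x ≤ g x := fun x => by
    by_cases hx : x ∈ O
    · exact (hg1 x hx).le
    · rw [hg3 x hx]
  have hgI : ∀ x ∈ Finset.Icc 1 (n' + 1), g x ∈ Finset.Icc 1 (n' + 1) := fun x hx => by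
    by_cases hxO : x ∈ O
    · exact hC (hg2 x hxO)
    · rwa [hg3 x hxO]
  have hhI : ∀ y ∈ Finset.Icc 1 (n' + 1), h y ∈ Finset.Icc 1 (n' + 1) := fun y hy => by
    by_cases hyC : y ∈ C
    · exact hO (hh1 y hyC).1
    · rwa [hh2 y hyC]
  have hgiter : ∀ x ∈ Finset.Icc 1 (n' + 1), ∀ k, g^[k] x ∈ Finset.Icc 1 (n' + 1) := by
    intro x hx k
    induction k with
    | zero => simpa using hx
    | succ k ih => rw [Function.iterate_succ_apply']; exact hgI _ ih
  have hhiter : ∀ y ∈ Finset.Icc 1 (n' + 1), ∀ k, h^[k] y ∈ Finset.Icc 1 (n' + 1) := by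
    intro y hy k
    induction k with
    | zero => simpa using hy
    | succ k ih => rw [Function.iterate_succ_apply']; exact hhI _ ih
  have h1C : 1 ∉ C := by
    intro h1
    obtain ⟨hO', hlt, _⟩ := hh1 1 h1
    have := hO hO'
    rw [Finset.mem_Icc] at this
    omega
  have stab : ∀ y ∈ Finset.Icc 1 (n' + 1),
      ∃ t ≤ n', (h^[t] y ∉ C ∧ ∀ s, t ≤ s → h^[s] y = h^[t] y) := by
    intro y hy
    by_cases hall : ∃ t ≤ n', h^[t] y ∉ C
    · obtain ⟨t, ht, htc⟩ := hall
      refine ⟨t, ht, htc, fun s hs => ?_⟩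
      obtain ⟨d, rfl⟩ := Nat.exists_eq_add_of_le hs
      rw [add_comm, Function.iterate_add_apply, Function.iterate_fixed (hh2 _ htc)]
    · push_neg at hall
      exfalso
      have dec : ∀ t ≤ n', h^[t] y + t ≤ y := by
        intro t ht
        induction t with
        | zero => simp
        | succ t ih =>
          have h1 := ih (by omega)
          have h2 : h^[t] y ∈ C := hall t (by omega)
          have h3 := (hh1 _ h2).2.1
          rw [Function.iterate_succ_apply']
          omega
      have h1 := dec n' le_rfl
      have h2 : h^[n'] y ∈ C := hall n' le_rfl
      have h3 := hC h2
      rw [Finset.mem_Icc] at h3 hy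
      have h4 : h^[n'] y = 1 := by omega
      rw [h4] at h2
      exact h1C h2
  have Sstab : ∀ y ∈ Finset.Icc 1 (n' + 1), h^[n'] y = h^[n' + 1] y := by
    intro y hy
    obtain ⟨t, ht, htc, hfix⟩ := stab y hy
    rw [hfix n' ht, hfix (n' + 1) (by omega)]
  have SnotC : ∀ y ∈ Finset.Icc 1 (n' + 1), h^[n' + 1] y ∉ C := by
    intro y hy
    obtain ⟨t, ht, htc, hfix⟩ := stab y hy
    rw [hfix (n' + 1) (by omega)]
    exact htc
  have S_of_notC : ∀ y, y ∉ C → h^[n' + 1] y = y :=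
    fun y hy => Function.iterate_fixed (hh2 y hy) _
  have SI : ∀ y ∈ Finset.Icc 1 (n' + 1), h^[n' + 1] y ∈ Finset.Icc 1 (n' + 1) :=
    fun y hy => hhiter y hy _
  have L2 : ∀ x ∈ Finset.Icc 1 (n' + 1), h^[n' + 1] (g x) = h^[n' + 1] x := by
    intro x hx
    by_cases hxO : x ∈ O
    · have e1 : h^[n' + 1] (g x) = h^[n'] x := by
        rw [Function.iterate_succ_apply, hgh x hxO]
      rw [e1, Sstab x hx]
    · rw [hg3 x hxO]
  have L5 : ∀ m ∈ Finset.Icc 1 (n' + 1), ∀ k, h^[n' + 1] (g^[k] m) = h^[n' + 1] m := by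
    intro m hm k
    induction k with
    | zero => rfl
    | succ k ih =>
      have e : g^[k + 1] m = g (g^[k] m) := Function.iterate_succ_apply' g k m
      rw [e, L2 _ (hgiter m hm k), ih]
  have L4aux : ∀ t, ∀ y ∈ Finset.Icc 1 (n' + 1), h^[t] y ∉ C →
      ∃ k ≤ t, g^[k] (h^[t] y) = y := by
    intro t
    induction t with
    | zero => exact fun y hy _ => ⟨0, le_rfl, rfl⟩
    | succ t ih =>
      intro y hy hnc
      by_cases hyC : y ∈ C
      · obtain ⟨hmO, hlt, hgy⟩ := hh1 y hyC
        have hhyI : h y ∈ Finset.Icc 1 (n' + 1) := hO hmO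
        rw [Function.iterate_succ_apply] at hnc
        obtain ⟨k, hk, hgk⟩ := ih (h y) hhyI hnc
        refine ⟨k + 1, by omega, ?_⟩
        have e1 : h^[t + 1] y = h^[t] (h y) := Function.iterate_succ_apply h t y
        have e2 : g^[k + 1] (h^[t] (h y)) = g (g^[k] (h^[t] (h y))) :=
          Function.iterate_succ_apply' g k _
        rw [e1, e2, hgk, hgy]
      · have e1 : h^[t + 1] y = h^[t] y := by
          rw [Function.iterate_succ_apply, hh2 y hyC]
        rw [e1] at hnc ⊢
        obtain ⟨k, hk, hgk⟩ := ih y hy hnc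
        exact ⟨k, by omega, hgk⟩
  have L4 : ∀ y ∈ Finset.Icc 1 (n' + 1), ∃ k ≤ n' + 1, g^[k] (h^[n' + 1] y) = y :=
    fun y hy => L4aux (n' + 1) y hy (SnotC y hy)
  have gmono : ∀ m : ℕ, Monotone fun k => g^[k] m := by
    intro m
    apply monotone_nat_of_le_succ
    intro k
    have e : g^[k + 1] m = g (g^[k] m) := Function.iterate_succ_apply' g k m
    rw [e]
    exact hgle _
  set blk : ℕ → Finset ℕ := fun m => (Finset.range (n' + 2)).image fun k => g^[k] m with hblk
  have mem_blk : ∀ m ∈ Finset.Icc 1 (n' + 1), m ∉ C →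
      ∀ y, y ∈ blk m ↔ (y ∈ Finset.Icc 1 (n' + 1) ∧ h^[n' + 1] y = m) := by
    intro m hm hmc y
    rw [hblk]
    simp only [Finset.mem_image, Finset.mem_range]
    constructor
    · rintro ⟨k, hk, rfl⟩
      exact ⟨hgiter m hm k, by rw [L5 m hm k, S_of_notC m hmc]⟩
    · rintro ⟨hyI, hyS⟩
      obtain ⟨k, hk, hgk⟩ := L4 y hyI
      rw [hyS] at hgk
      exact ⟨k, by omega, hgk⟩
  have self_mem_blk : ∀ m : ℕ, m ∈ blk m := by
    intro m
    rw [hblk]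
    simp only [Finset.mem_image, Finset.mem_range]
    exact ⟨0, by omega, rfl⟩
  refine ⟨⟨((Finset.Icc 1 (n' + 1)).filter (fun m => m ∉ C)).image blk, ?_, ?_, ?_⟩, ?_, ?_⟩
  · intro B hB
    simp only [Finset.mem_image, Finset.mem_filter] at hB
    obtain ⟨m, _, rfl⟩ := hB
    exact ⟨m, self_mem_blk m⟩
  · intro B hB B' hB' hne
    simp only [Finset.mem_image, Finset.mem_filter] at hB hB'
    obtain ⟨m, ⟨hmI, hmC⟩, rfl⟩ := hB
    obtain ⟨m', ⟨hmI', hmC'⟩, rfl⟩ := hB'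
    rw [Finset.disjoint_left]
    intro y hy hy'
    rw [mem_blk m hmI hmC y] at hy
    rw [mem_blk m' hmI' hmC' y] at hy'
    exact hne (congrArg blk (hy.2.symm.trans hy'.2))
  · intro i
    constructor
    · rintro ⟨B, hB, hi⟩
      simp only [Finset.mem_image, Finset.mem_filter] at hB
      obtain ⟨m, ⟨hmI, hmC⟩, rfl⟩ := hB
      exact ((mem_blk m hmI hmC i).mp hi).1
    · intro hi
      refine ⟨blk (h^[n' + 1] i), ?_, ?_⟩
      · simp only [Finset.mem_image, Finset.mem_filter]
        exact ⟨h^[n' + 1] i, ⟨SI i hi, SnotC i hi⟩, rfl⟩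
      · exact (mem_blk _ (SI i hi) (SnotC i hi) i).mpr ⟨hi, rfl⟩
  · -- openers = O
    ext i
    simp only [SetPartitionA.openers, Finset.mem_filter]
    constructor
    · rintro ⟨hiI, B, hB, hiB, j, hjB, hij⟩
      simp only [Finset.mem_image, Finset.mem_filter] at hB
      obtain ⟨m, ⟨hmI, hmC⟩, rfl⟩ := hB
      by_contra hiO
      have hgi : g i = i := hg3 i hiO
      rw [hblk] at hiB hjB
      simp only [Finset.mem_image, Finset.mem_range] at hiB hjB
      obtain ⟨k, hk, hki⟩ := hiB
      obtain ⟨k', hk', hkj⟩ := hjB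
      rcases le_or_gt k' k with hle | hlt
      · have hmono : g^[k'] m ≤ g^[k] m := gmono m hle
        rw [hki, hkj] at hmono
        omega
      · have heq : g^[k'] m = i := by
          obtain ⟨d, rfl⟩ := Nat.exists_eq_add_of_le hlt.le
          rw [add_comm, Function.iterate_add_apply, hki, Function.iterate_fixed hgi]
        rw [hkj] at heq
        omega
    · intro hiO
      have hiI : i ∈ Finset.Icc 1 (n' + 1) := hO hiO
      refine ⟨hiI, blk (h^[n' + 1] i), ?_, ?_, g i, ?_, hg1 i hiO⟩
      · simp only [Finset.mem_image, Finset.mem_filter]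
        exact ⟨h^[n' + 1] i, ⟨SI i hiI, SnotC i hiI⟩, rfl⟩
      · exact (mem_blk _ (SI i hiI) (SnotC i hiI) i).mpr ⟨hiI, rfl⟩
      · exact (mem_blk _ (SI i hiI) (SnotC i hiI) (g i)).mpr ⟨hgI i hiI, L2 i hiI⟩
  · -- closers = C
    ext i
    simp only [SetPartitionA.closers, Finset.mem_filter]
    constructor
    · rintro ⟨hiI, B, hB, hiB, j, hjB, hji⟩
      simp only [Finset.mem_image, Finset.mem_filter] at hB
      obtain ⟨m, ⟨hmI, hmC⟩, rfl⟩ := hB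
      by_contra hiC
      have hSi : h^[n' + 1] i = i := S_of_notC i hiC
      have him : i = m := by
        have := ((mem_blk m hmI hmC i).mp hiB).2
        omega
      rw [hblk] at hjB
      simp only [Finset.mem_image, Finset.mem_range] at hjB
      obtain ⟨k', hk', rfl⟩ := hjB
      have hmono : g^[0] m ≤ g^[k'] m := gmono m (Nat.zero_le k')
      simp only [Function.iterate_zero_apply] at hmono
      omega
    · intro hiC
      have hiI := hC hiC
      obtain ⟨hhO, hhlt, hghy⟩ := hh1 i hiC
      have hhI' : h i ∈ Finset.Icc 1 (n' + 1) := hO hhO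
      refine ⟨hiI, blk (h^[n' + 1] i), ?_, ?_, h i, ?_, hhlt⟩
      · simp only [Finset.mem_image, Finset.mem_filter]
        exact ⟨h^[n' + 1] i, ⟨SI i hiI, SnotC i hiI⟩, rfl⟩
      · exact (mem_blk _ (SI i hiI) (SnotC i hiI) i).mpr ⟨hiI, rfl⟩
      · have hSS : h^[n' + 1] (h i) = h^[n' + 1] i := by
          have e : h^[n' + 1] i = h^[n'] (h i) := Function.iterate_succ_apply h n' i
          rw [e]
          exact (Sstab (h i) hhI').symm
        exact (mem_blk _ (SI i hiI) (SnotC i hiI) (h i)).mpr ⟨hhI', hSS⟩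

lemma aux_key (n : ℕ) (O C : Finset ℕ)
    (hO : O ⊆ Finset.Icc 1 n) (hC : C ⊆ Finset.Icc 1 n)
    (hcard : C.card = O.card)
    (hineq : ∀ k : ℕ, k < n → (C ∩ Finset.Icc 1 (k + 1)).card ≤ (O ∩ Finset.Icc 1 k).card)
    (i : Fin O.card) :
    ((O.orderIsoOfFin rfl i : ℕ) < (C.orderIsoOfFin hcard i : ℕ)) := by
  set eO := O.orderIsoOfFin rfl with heO
  set eC := C.orderIsoOfFin hcard with heC
  set c := (eC i : ℕ) with hc
  have hcC : c ∈ C := (eC i).2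
  have hcI := hC hcC
  rw [Finset.mem_Icc] at hcI
  have step1 : i.1 + 1 ≤ (C ∩ Finset.Icc 1 c).card := by
    have himg : (Finset.Iic i).image (fun j => (eC j : ℕ)) ⊆ C ∩ Finset.Icc 1 c := by
      intro t ht
      simp only [Finset.mem_image, Finset.mem_Iic] at ht
      obtain ⟨j, hj, rfl⟩ := ht
      have h1 : (eC j : ℕ) ∈ C := (eC j).2
      have h2 := hC h1
      rw [Finset.mem_Icc] at h2
      have h3 : (eC j : ℕ) ≤ c := Subtype.coe_le_coe.mpr (eC.monotone hj)
      rw [Finset.mem_inter, Finset.mem_Icc]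
      exact ⟨h1, h2.1, h3⟩
    have hinj : Set.InjOn (fun j => ((eC j : ℕ))) (Finset.Iic i) := by
      intro a _ b _ hab
      exact eC.injective (Subtype.ext hab)
    calc i.1 + 1 = (Finset.Iic i).card := (Fin.card_Iic i).symm
      _ = ((Finset.Iic i).image (fun j => (eC j : ℕ))).card :=
          (Finset.card_image_of_injOn hinj).symm
      _ ≤ _ := Finset.card_le_card himg
  have step2 := hineq (c - 1) (by omega)
  have hc1 : c - 1 + 1 = c := by omega
  rw [hc1] at step2
  have step3 : i.1 + 1 ≤ (O ∩ Finset.Icc 1 (c - 1)).card := le_trans step1 step2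
  by_contra hcon
  push_neg at hcon
  have hsub : O ∩ Finset.Icc 1 (c - 1) ⊆ (Finset.Iio i).image (fun j => (eO j : ℕ)) := by
    intro t ht
    rw [Finset.mem_inter, Finset.mem_Icc] at ht
    obtain ⟨htO, _, htc⟩ := ht
    have hjt : (eO (eO.symm ⟨t, htO⟩) : ℕ) = t := by simp
    have hji : eO.symm ⟨t, htO⟩ < i := by
      by_contra hge
      push_neg at hge
      have h5 : (eO i : ℕ) ≤ (eO (eO.symm ⟨t, htO⟩) : ℕ) :=
        Subtype.coe_le_coe.mpr (eO.monotone hge)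
      rw [hjt] at h5
      omega
    simp only [Finset.mem_image, Finset.mem_Iio]
    exact ⟨eO.symm ⟨t, htO⟩, hji, hjt⟩
  have h6 := Finset.card_le_card hsub
  have h7 : ((Finset.Iio i).image fun j => (eO j : ℕ)).card ≤ i.1 := by
    calc ((Finset.Iio i).image fun j => (eO j : ℕ)).card
        ≤ (Finset.Iio i).card := Finset.card_image_le
      _ = i.1 := Fin.card_Iio i
  omega

end SPAux

theorem stmt0 (n : ℕ) (hn : 0 < n) (O C : Finset ℕ)
    (hO : O ⊆ Finset.Icc 1 n) (hC : C ⊆ Finset.Icc 1 n) :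
    (O.card = C.card ∧
      ∀ k : ℕ, k < n → (C ∩ Finset.Icc 1 (k + 1)).card ≤ (O ∩ Finset.Icc 1 k).card) ↔
    ∃ P : SetPartitionA n, P.openers = O ∧ P.closers = C := by
  constructor
  · rintro ⟨hcard, hineq⟩
    have hcard' : C.card = O.card := hcard.symm
    set eO := O.orderIsoOfFin rfl with heO
    set eC := C.orderIsoOfFin hcard' with heC
    have key : ∀ i : Fin O.card, (eO i : ℕ) < (eC i : ℕ) :=
      SPAux.aux_key n O C hO hC hcard' hineq
    refine SPAux.aux_exists n hn O C hO hC
      (fun x => if hx : x ∈ O then (eC (eO.symm ⟨x, hx⟩) : ℕ) else x)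
      (fun y => if hy : y ∈ C then (eO (eC.symm ⟨y, hy⟩) : ℕ) else y)
      ?_ ?_ ?_ ?_ ?_ ?_
    · intro x hx
      simp only [dif_pos hx]
      have e1 : (eO (eO.symm ⟨x, hx⟩) : ℕ) = x := by simp
      have := key (eO.symm ⟨x, hx⟩)
      rw [e1] at this
      exact this
    · intro x hx
      simp only [dif_pos hx]
      exact (eC (eO.symm ⟨x, hx⟩)).2
    · intro x hx
      simp only [dif_neg hx]
    · intro y hy
      simp only [dif_pos hy]
      refine ⟨(eO (eC.symm ⟨y, hy⟩)).2, ?_, ?_⟩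
      · have e1 : (eC (eC.symm ⟨y, hy⟩) : ℕ) = y := by simp
        have := key (eC.symm ⟨y, hy⟩)
        rw [e1] at this
        exact this
      · have hmem : (eO (eC.symm ⟨y, hy⟩) : ℕ) ∈ O := (eO (eC.symm ⟨y, hy⟩)).2
        simp only [dif_pos hmem]
        have e2 : eO.symm ⟨(eO (eC.symm ⟨y, hy⟩) : ℕ), hmem⟩ = eC.symm ⟨y, hy⟩ := by
          apply eO.injective
          simp only [OrderIso.apply_symm_apply]
        rw [e2]
        simp
    · intro y hy
      simp only [dif_neg hy]
    · intro x hx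
      simp only [dif_pos hx]
      have hmem : (eC (eO.symm ⟨x, hx⟩) : ℕ) ∈ C := (eC (eO.symm ⟨x, hx⟩)).2
      simp only [dif_pos hmem]
      have e2 : eC.symm ⟨(eC (eO.symm ⟨x, hx⟩) : ℕ), hmem⟩ = eO.symm ⟨x, hx⟩ := by
        apply eC.injective
        simp only [OrderIso.apply_symm_apply]
      rw [e2]
      simp
  · rintro ⟨P, rfl, rfl⟩
    exact ⟨SPAux.card_openers_eq P, fun k _ => SPAux.prefix_ineq P k⟩
end
end

section
/- For every positive integer n there exists a bijection Φ on the set of set partitions of [n] such that for every set partition 𝓑: op(Φ(𝓑)) = op(𝓑), cl(Φ(𝓑)) = cl(𝓑), the number of crossings of Φ(𝓑) equals the number of nestings of 𝓑, and the number of nestings of Φ(𝓑) equals the number of crossings of 𝓑. -/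
open scoped Classical
noncomputable section

namespace KZ

def Good (n : ℕ) (A : Finset (ℕ × ℕ)) : Prop :=
  (∀ p ∈ A, 1 ≤ p.1 ∧ p.1 < p.2 ∧ p.2 ≤ n) ∧
  (∀ p ∈ A, ∀ q ∈ A, p.1 = q.1 → p = q) ∧
  (∀ p ∈ A, ∀ q ∈ A, p.2 = q.2 → p = q)

def leftSet (A : Finset (ℕ × ℕ)) : Finset ℕ := A.image Prod.fst
def rightSet (A : Finset (ℕ × ℕ)) : Finset ℕ := A.image Prod.snd
def openAt (A : Finset (ℕ × ℕ)) (j : ℕ) : Finset ℕ :=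
  (A.filter fun p => p.1 < j ∧ j ≤ p.2).image Prod.fst
def sA (A : Finset (ℕ × ℕ)) (j : ℕ) : Finset ℕ :=
  (A.filter fun p => p.1 ≤ j ∧ j < p.2).image Prod.fst
def opOf (A : Finset (ℕ × ℕ)) (j : ℕ) : ℕ :=
  if h : ∃ p ∈ A, p.2 = j then h.choose.1 else 0

def rank (s : Finset ℕ) (x : ℕ) : ℕ := (s.filter (· ≤ x)).card
def kth (s : Finset ℕ) (k : ℕ) : ℕ :=
  if h : ∃ x ∈ s, rank s x = k then h.choose else 0

lemma rank_pos {s : Finset ℕ} {x : ℕ} (hx : x ∈ s) : 1 ≤ rank s x := by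
  have : x ∈ s.filter (· ≤ x) := Finset.mem_filter.2 ⟨hx, le_refl x⟩
  exact Finset.card_pos.2 ⟨x, this⟩

lemma rank_le_card {s : Finset ℕ} {x : ℕ} : rank s x ≤ s.card :=
  Finset.card_le_card (Finset.filter_subset _ _)

lemma rank_injOn {s : Finset ℕ} {x y : ℕ} (hx : x ∈ s) (hy : y ∈ s)
    (h : rank s x = rank s y) : x = y := by
  by_contra hne
  have key : ∀ a b : ℕ, a ∈ s → b ∈ s → a < b → rank s a < rank s b := by
    intro a b ha hb hab
    apply Finset.card_lt_card
    constructor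
    · intro z hz
      rcases Finset.mem_filter.1 hz with ⟨hzs, hz2⟩
      exact Finset.mem_filter.2 ⟨hzs, by omega⟩
    · intro hsub
      have : b ∈ s.filter (· ≤ a) := hsub (Finset.mem_filter.2 ⟨hb, le_refl b⟩)
      exact absurd (Finset.mem_filter.1 this).2 (by omega)
  rcases lt_or_gt_of_ne hne with hlt | hlt
  · exact absurd h (Nat.ne_of_lt (key _ _ hx hy hlt))
  · exact absurd h (Nat.ne_of_gt (key _ _ hy hx hlt))

lemma rank_surjOn {s : Finset ℕ} {k : ℕ} (h1 : 1 ≤ k) (h2 : k ≤ s.card) :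
    ∃ x ∈ s, rank s x = k := by
  have hsub : s.image (rank s) ⊆ Finset.Icc 1 s.card := by
    intro m hm
    rcases Finset.mem_image.1 hm with ⟨x, hx, rfl⟩
    exact Finset.mem_Icc.2 ⟨rank_pos hx, rank_le_card⟩
  have hcard : (s.image (rank s)).card = s.card :=
    Finset.card_image_of_injOn (fun x hx y hy => rank_injOn hx hy)
  have heq : s.image (rank s) = Finset.Icc 1 s.card := by
    apply Finset.eq_of_subset_of_card_le hsub
    simp [hcard]
  have : k ∈ s.image (rank s) := by rw [heq]; exact Finset.mem_Icc.2 ⟨h1, h2⟩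
  rcases Finset.mem_image.1 this with ⟨x, hx, hxk⟩
  exact ⟨x, hx, hxk⟩

lemma kth_spec {s : Finset ℕ} {k : ℕ} (h1 : 1 ≤ k) (h2 : k ≤ s.card) :
    kth s k ∈ s ∧ rank s (kth s k) = k := by
  have h := rank_surjOn h1 h2
  have h' : ∃ x, x ∈ s ∧ rank s x = k := by simpa using h
  rw [kth, dif_pos (by simpa using h)]
  exact (by simpa using h : ∃ x, x ∈ s ∧ rank s x = k).choose_spec

lemma kth_rank {s : Finset ℕ} {x : ℕ} (hx : x ∈ s) : kth s (rank s x) = x := by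
  have h1 : 1 ≤ rank s x := rank_pos hx
  have h2 : rank s x ≤ s.card := rank_le_card
  obtain ⟨hm, hr⟩ := kth_spec h1 h2
  exact rank_injOn hm hx hr

lemma filter_gt_card {s : Finset ℕ} {x : ℕ} :
    (s.filter (fun y => x < y)).card = s.card - rank s x := by
  have := Finset.card_filter_add_card_filter_not (s := s) (p := (· ≤ x))
  have he : s.filter (fun y => ¬ y ≤ x) = s.filter (fun y => x < y) := by
    apply Finset.filter_congr
    intro y _
    constructor <;> (intro h; omega)
  rw [he] at this
  unfold rank
  omega

lemma filter_lt_card {s : Finset ℕ} {x : ℕ} (hx : x ∈ s) :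
    (s.filter (fun y => y < x)).card = rank s x - 1 := by
  have : s.filter (· ≤ x) = insert x (s.filter (fun y => y < x)) := by
    ext y
    simp only [Finset.mem_filter, Finset.mem_insert]
    constructor
    · rintro ⟨hy, hle⟩
      rcases eq_or_lt_of_le hle with h | h
      · exact Or.inl h
      · exact Or.inr ⟨hy, h⟩
    · rintro (rfl | ⟨hy, hlt⟩)
      · exact ⟨hx, le_refl _⟩
      · exact ⟨hy, hlt.le⟩
  have hx' : x ∉ s.filter (fun y => y < x) := by simp
  rw [rank, this, Finset.card_insert_of_notMem hx']
  omega


def rk (A : Finset (ℕ × ℕ)) (j : ℕ) : ℕ := rank (openAt A j) (opOf A j)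

def crossCount (A : Finset (ℕ × ℕ)) : ℕ :=
  ((A ×ˢ A).filter fun q => q.1.1 < q.2.1 ∧ q.2.1 < q.1.2 ∧ q.1.2 < q.2.2).card
def nestCount (A : Finset (ℕ × ℕ)) : ℕ :=
  ((A ×ˢ A).filter fun q => q.1.1 < q.2.1 ∧ q.2.1 < q.2.2 ∧ q.2.2 < q.1.2).card

lemma opOf_spec {A : Finset (ℕ × ℕ)} {j : ℕ} (h : j ∈ rightSet A) : (opOf A j, j) ∈ A := by
  rcases Finset.mem_image.1 h with ⟨p, hp, hpj⟩
  have hex : ∃ p ∈ A, p.2 = j := ⟨p, hp, hpj⟩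
  rw [opOf, dif_pos hex]
  obtain ⟨h1, h2⟩ := hex.choose_spec
  have : (hex.choose.1, j) = hex.choose := by
    conv_rhs => rw [← Prod.mk.eta (p := hex.choose)]
    rw [h2]
  rw [this]; exact h1

lemma opOf_eq {n : ℕ} {A : Finset (ℕ × ℕ)} (hG : Good n A) {p : ℕ × ℕ} {j : ℕ}
    (hp : p ∈ A) (hpj : p.2 = j) : p = (opOf A j, j) := by
  have hj : j ∈ rightSet A := Finset.mem_image.2 ⟨p, hp, hpj⟩
  exact hG.2.2 p hp _ (opOf_spec hj) hpj

lemma opOf_mem_openAt {n : ℕ} {A : Finset (ℕ × ℕ)} (hG : Good n A) {j : ℕ}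
    (hj : j ∈ rightSet A) : opOf A j ∈ openAt A j := by
  have hp := opOf_spec hj
  have hb := hG.1 _ hp
  exact Finset.mem_image.2 ⟨_, Finset.mem_filter.2 ⟨hp, by simpa using hb.2.1, le_refl j⟩, rfl⟩

lemma rk_bounds {n : ℕ} {A : Finset (ℕ × ℕ)} (hG : Good n A) {j : ℕ}
    (hj : j ∈ rightSet A) : 1 ≤ rk A j ∧ rk A j ≤ (openAt A j).card :=
  ⟨rank_pos (opOf_mem_openAt hG hj), rank_le_card⟩

lemma crossCount_eq {n : ℕ} {A : Finset (ℕ × ℕ)} (hG : Good n A) :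
    crossCount A = ∑ j ∈ rightSet A, ((openAt A j).card - rk A j) := by
  rw [crossCount,
    Finset.card_eq_sum_card_fiberwise (f := fun q => q.1.2) (t := rightSet A)
      (fun q hq => by
        rcases Finset.mem_filter.1 hq with ⟨hq1, -⟩
        exact Finset.mem_image.2 ⟨q.1, (Finset.mem_product.1 hq1).1, rfl⟩)]
  apply Finset.sum_congr rfl
  intro j hj
  have hbij : (((A ×ˢ A).filter fun q => q.1.1 < q.2.1 ∧ q.2.1 < q.1.2 ∧ q.1.2 < q.2.2).filter
      (fun q => q.1.2 = j)).card = ((openAt A j).filter (fun x => opOf A j < x)).card := by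
    apply Finset.card_bij (fun q _ => q.2.1)
    · intro q hq
      rcases Finset.mem_filter.1 hq with ⟨hq1, hqj⟩
      rcases Finset.mem_filter.1 hq1 with ⟨hqp, hc1, hc2, hc3⟩
      rcases Finset.mem_product.1 hqp with ⟨ha1, ha2⟩
      have hq1e : q.1 = (opOf A j, j) := opOf_eq hG ha1 hqj
      refine Finset.mem_filter.2 ⟨Finset.mem_image.2 ⟨q.2, Finset.mem_filter.2 ⟨ha2, ?_, ?_⟩, rfl⟩, ?_⟩
      · omega
      · omega
      · have := congrArg Prod.fst hq1e; simp only at this; omega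
    · intro q hq q' hq' he
      rcases Finset.mem_filter.1 hq with ⟨hq1, hqj⟩
      rcases Finset.mem_filter.1 hq1 with ⟨hqp, -⟩
      rcases Finset.mem_product.1 hqp with ⟨ha1, ha2⟩
      rcases Finset.mem_filter.1 hq' with ⟨hq1', hqj'⟩
      rcases Finset.mem_filter.1 hq1' with ⟨hqp', -⟩
      rcases Finset.mem_product.1 hqp' with ⟨ha1', ha2'⟩
      have e2 : q.2 = q'.2 := hG.2.1 _ ha2 _ ha2' he
      have e1 : q.1 = q'.1 := by
        rw [opOf_eq hG ha1 hqj, opOf_eq hG ha1' hqj']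
      exact Prod.ext e1 e2
    · intro x hx
      rcases Finset.mem_filter.1 hx with ⟨hxo, hxgt⟩
      rcases Finset.mem_image.1 hxo with ⟨p, hp, hpx⟩
      rcases Finset.mem_filter.1 hp with ⟨hpA, hp1, hp2⟩
      have hpj : p.2 ≠ j := by
        intro he
        have := opOf_eq hG hpA he
        have : p.1 = opOf A j := congrArg Prod.fst this
        omega
      refine ⟨((opOf A j, j), p), Finset.mem_filter.2 ⟨Finset.mem_filter.2
        ⟨Finset.mem_product.2 ⟨opOf_spec hj, hpA⟩, ?_, ?_, ?_⟩, rfl⟩, hpx⟩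
      · simpa [hpx] using hxgt
      · simpa using hp1
      · simp only; omega
  rw [hbij, filter_gt_card]
  rfl

lemma nestCount_eq {n : ℕ} {A : Finset (ℕ × ℕ)} (hG : Good n A) :
    nestCount A = ∑ j ∈ rightSet A, (rk A j - 1) := by
  rw [nestCount,
    Finset.card_eq_sum_card_fiberwise (f := fun q => q.2.2) (t := rightSet A)
      (fun q hq => by
        rcases Finset.mem_filter.1 hq with ⟨hq1, -⟩
        exact Finset.mem_image.2 ⟨q.2, (Finset.mem_product.1 hq1).2, rfl⟩)]
  apply Finset.sum_congr rfl
  intro j hj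
  have hbij : (((A ×ˢ A).filter fun q => q.1.1 < q.2.1 ∧ q.2.1 < q.2.2 ∧ q.2.2 < q.1.2).filter
      (fun q => q.2.2 = j)).card = ((openAt A j).filter (fun x => x < opOf A j)).card := by
    apply Finset.card_bij (fun q _ => q.1.1)
    · intro q hq
      rcases Finset.mem_filter.1 hq with ⟨hq1, hqj⟩
      rcases Finset.mem_filter.1 hq1 with ⟨hqp, hc1, hc2, hc3⟩
      rcases Finset.mem_product.1 hqp with ⟨ha1, ha2⟩
      have hq2e : q.2 = (opOf A j, j) := opOf_eq hG ha2 hqj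
      have : q.2.1 = opOf A j := congrArg Prod.fst hq2e
      refine Finset.mem_filter.2 ⟨Finset.mem_image.2 ⟨q.1, Finset.mem_filter.2 ⟨ha1, ?_, ?_⟩, rfl⟩, ?_⟩
      · omega
      · omega
      · omega
    · intro q hq q' hq' he
      rcases Finset.mem_filter.1 hq with ⟨hq1, hqj⟩
      rcases Finset.mem_filter.1 hq1 with ⟨hqp, -⟩
      rcases Finset.mem_product.1 hqp with ⟨ha1, ha2⟩
      rcases Finset.mem_filter.1 hq' with ⟨hq1', hqj'⟩
      rcases Finset.mem_filter.1 hq1' with ⟨hqp', -⟩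
      rcases Finset.mem_product.1 hqp' with ⟨ha1', ha2'⟩
      have e1 : q.1 = q'.1 := hG.2.1 _ ha1 _ ha1' he
      have e2 : q.2 = q'.2 := by
        rw [opOf_eq hG ha2 hqj, opOf_eq hG ha2' hqj']
      exact Prod.ext e1 e2
    · intro x hx
      rcases Finset.mem_filter.1 hx with ⟨hxo, hxlt⟩
      rcases Finset.mem_image.1 hxo with ⟨p, hp, hpx⟩
      rcases Finset.mem_filter.1 hp with ⟨hpA, hp1, hp2⟩
      have hoj : opOf A j < j := by
        have := hG.1 _ (opOf_spec hj); simpa using this.2.1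
      have hpj : p.2 ≠ j := by
        intro he
        have := opOf_eq hG hpA he
        have : p.1 = opOf A j := congrArg Prod.fst this
        omega
      refine ⟨(p, (opOf A j, j)), Finset.mem_filter.2 ⟨Finset.mem_filter.2
        ⟨Finset.mem_product.2 ⟨hpA, opOf_spec hj⟩, ?_, ?_, ?_⟩, rfl⟩, hpx⟩
      · simp only; omega
      · simp only; omega
      · simp only; omega
  rw [hbij, filter_lt_card (opOf_mem_openAt hG hj)]
  rfl


def dstep (L R : Finset ℕ) (c : ℕ → ℕ) (st : Finset ℕ × Finset (ℕ × ℕ)) (j : ℕ) :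
    Finset ℕ × Finset (ℕ × ℕ) :=
  ((if j ∈ L then insert j (if j ∈ R then st.1.erase (kth st.1 (c j)) else st.1)
    else (if j ∈ R then st.1.erase (kth st.1 (c j)) else st.1)),
   if j ∈ R then insert (kth st.1 (c j), j) st.2 else st.2)

def drun (L R : Finset ℕ) (c : ℕ → ℕ) : ℕ → Finset ℕ × Finset (ℕ × ℕ)
  | 0 => (∅, ∅)
  | j + 1 => dstep L R c (drun L R c j) (j + 1)

lemma drun_congr {L R : Finset ℕ} {c c' : ℕ → ℕ} (h : ∀ j ∈ R, c j = c' j) :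
    ∀ j, drun L R c j = drun L R c' j := by
  intro j
  induction j with
  | zero => rfl
  | succ j ih =>
    show dstep L R c (drun L R c j) (j+1) = dstep L R c' (drun L R c' j) (j+1)
    rw [ih, dstep, dstep]
    by_cases hR : (j+1) ∈ R
    · rw [h _ hR]
    · simp [hR]

lemma mem_sA {A : Finset (ℕ × ℕ)} {j x : ℕ} :
    x ∈ sA A j ↔ ∃ p ∈ A, p.1 = x ∧ p.1 ≤ j ∧ j < p.2 := by
  simp only [sA, Finset.mem_image, Finset.mem_filter]
  constructor
  · rintro ⟨p, ⟨hp, h1, h2⟩, rfl⟩; exact ⟨p, hp, rfl, h1, h2⟩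
  · rintro ⟨p, hp, rfl, h1, h2⟩; exact ⟨p, ⟨hp, h1, h2⟩, rfl⟩

lemma mem_sA_le {A : Finset (ℕ × ℕ)} {j x : ℕ} (h : x ∈ sA A j) : x ≤ j := by
  rcases mem_sA.1 h with ⟨p, _, rfl, h1, _⟩; exact h1

lemma openAt_succ {A : Finset (ℕ × ℕ)} (j : ℕ) : openAt A (j+1) = sA A j := by
  unfold openAt sA
  congr 1
  apply Finset.filter_congr
  intro p _
  constructor <;> (rintro ⟨h1, h2⟩; exact ⟨by omega, by omega⟩)

lemma sA_zero {n : ℕ} {A : Finset (ℕ × ℕ)} (hG : Good n A) : sA A 0 = ∅ := by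
  ext x
  simp only [Finset.notMem_empty, iff_false, mem_sA]
  rintro ⟨p, hp, rfl, h1, h2⟩
  have := hG.1 p hp
  omega

lemma sA_step {n : ℕ} {A : Finset (ℕ × ℕ)} (hG : Good n A) (j : ℕ) :
    sA A (j+1) =
      (if (j+1) ∈ leftSet A then
        insert (j+1) (if (j+1) ∈ rightSet A then (sA A j).erase (opOf A (j+1)) else sA A j)
      else (if (j+1) ∈ rightSet A then (sA A j).erase (opOf A (j+1)) else sA A j)) := by
  have hmid : ∀ x, (x ∈ (if (j+1) ∈ rightSet A then (sA A j).erase (opOf A (j+1)) else sA A j))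
      ↔ (x ∈ sA A j ∧ ¬((j+1) ∈ rightSet A ∧ x = opOf A (j+1))) := by
    intro x
    by_cases hR : (j+1) ∈ rightSet A
    · simp only [if_pos hR, Finset.mem_erase]
      constructor
      · rintro ⟨h1, h2⟩; exact ⟨h2, fun h => h1 h.2⟩
      · rintro ⟨h1, h2⟩; exact ⟨fun h => h2 ⟨hR, h⟩, h1⟩
    · simp [hR]
  ext x
  by_cases hx : x = j + 1
  · subst hx
    have hnotmid : ¬ ((j+1) ∈ sA A j ∧ ¬((j+1) ∈ rightSet A ∧ (j+1) = opOf A (j+1))) := by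
      rintro ⟨h1, -⟩
      exact absurd (mem_sA_le h1) (by omega)
    by_cases hL : (j+1) ∈ leftSet A
    · rw [if_pos hL]
      constructor
      · intro _; exact Finset.mem_insert_self _ _
      · intro _
        rcases Finset.mem_image.1 hL with ⟨p, hp, hpx⟩
        have hb := hG.1 p hp
        exact mem_sA.2 ⟨p, hp, hpx, by omega, by omega⟩
    · simp only [if_neg hL, hmid]
      constructor
      · intro h
        rcases mem_sA.1 h with ⟨p, hp, hpx, -, -⟩
        exact absurd (Finset.mem_image.2 ⟨p, hp, hpx⟩) hL
      · intro h; exact absurd h hnotmid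
  · have hstep : x ∈ (if (j+1) ∈ leftSet A then
        insert (j+1) (if (j+1) ∈ rightSet A then (sA A j).erase (opOf A (j+1)) else sA A j)
      else (if (j+1) ∈ rightSet A then (sA A j).erase (opOf A (j+1)) else sA A j)) ↔
      (x ∈ sA A j ∧ ¬((j+1) ∈ rightSet A ∧ x = opOf A (j+1))) := by
      by_cases hL : (j+1) ∈ leftSet A
      · simp only [if_pos hL, Finset.mem_insert, hmid]
        constructor
        · rintro (h | h)
          · exact absurd h hx
          · exact h
        · intro h; exact Or.inr h
      · simp only [if_neg hL, hmid]
    rw [hstep]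
    constructor
    · intro h
      rcases mem_sA.1 h with ⟨p, hp, hpx, h1, h2⟩
      constructor
      · exact mem_sA.2 ⟨p, hp, hpx, by omega, by omega⟩
      · rintro ⟨hR, rfl⟩
        have := opOf_spec hR
        have hpe : p = (opOf A (j+1), j+1) := hG.2.1 p hp _ this (by rw [hpx])
        have : p.2 = j+1 := by rw [hpe]
        omega
    · rintro ⟨h, hnot⟩
      rcases mem_sA.1 h with ⟨p, hp, hpx, h1, h2⟩
      refine mem_sA.2 ⟨p, hp, hpx, by omega, ?_⟩
      by_cases hp2 : p.2 = j+1
      · have hR : (j+1) ∈ rightSet A := Finset.mem_image.2 ⟨p, hp, hp2⟩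
        have := opOf_eq hG hp hp2
        have : p.1 = opOf A (j+1) := by rw [this]
        exact absurd ⟨hR, by omega⟩ hnot
      · omega


lemma leftSet_insert (p : ℕ × ℕ) (B : Finset (ℕ × ℕ)) :
    leftSet (insert p B) = insert p.1 (leftSet B) := Finset.image_insert _ _ _

lemma rightSet_insert (p : ℕ × ℕ) (B : Finset (ℕ × ℕ)) :
    rightSet (insert p B) = insert p.2 (rightSet B) := Finset.image_insert _ _ _

structure DInv (n : ℕ) (A : Finset (ℕ × ℕ)) (j : ℕ) (s : Finset ℕ) (B : Finset (ℕ × ℕ)) :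
    Prop where
  bounds : ∀ p ∈ B, 1 ≤ p.1 ∧ p.1 < p.2 ∧ p.2 ≤ j
  luniq : ∀ p ∈ B, ∀ q ∈ B, p.1 = q.1 → p = q
  runiq : ∀ p ∈ B, ∀ q ∈ B, p.2 = q.2 → p = q
  rset : rightSet B = (rightSet A).filter (· ≤ j)
  smem : ∀ x ∈ s, x ∈ leftSet A ∧ 1 ≤ x ∧ x ≤ j ∧ x ∉ leftSet B
  lsub : ∀ x ∈ leftSet B, x ∈ leftSet A
  lcov : ∀ x ∈ leftSet A, x ≤ j → x ∈ s ∨ x ∈ leftSet B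
  scard : s.card = (sA A j).card

lemma dstep_inv {n : ℕ} {A : Finset (ℕ × ℕ)} (hG : Good n A)
    {c : ℕ → ℕ} (hc : ∀ j' ∈ rightSet A, 1 ≤ c j' ∧ c j' ≤ (openAt A j').card)
    {j : ℕ} {st : Finset ℕ × Finset (ℕ × ℕ)} (inv : DInv n A j st.1 st.2) :
    DInv n A (j+1) (dstep (leftSet A) (rightSet A) c st (j+1)).1
      (dstep (leftSet A) (rightSet A) c st (j+1)).2 := by
  have hleftB_le : ∀ x ∈ leftSet st.2, x ≤ j := by
    intro x hx
    rcases Finset.mem_image.1 hx with ⟨p, hp, rfl⟩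
    have := inv.bounds p hp; omega
  have hs_le : ∀ x ∈ st.1, x ≤ j := fun x hx => (inv.smem x hx).2.2.1
  by_cases hR : (j+1) ∈ rightSet A
  · -- closer case
    set k := kth st.1 (c (j+1)) with hkdef
    have hck : 1 ≤ c (j+1) ∧ c (j+1) ≤ st.1.card := by
      have h1 := hc _ hR
      have h2 : (openAt A (j+1)).card = (sA A j).card := by rw [openAt_succ]
      have h3 := inv.scard
      omega
    have hkmem : k ∈ st.1 := (kth_spec hck.1 hck.2).1
    obtain ⟨hkL, hk1, hkj, hkB⟩ := inv.smem k hkmem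
    have hB' : (dstep (leftSet A) (rightSet A) c st (j+1)).2 = insert (k, j+1) st.2 := by
      simp [dstep, hR, hkdef]
    have hopOf : opOf A (j+1) ∈ sA A j := by
      rw [← openAt_succ]; exact opOf_mem_openAt hG hR
    have bounds' : ∀ p ∈ insert (k, j+1) st.2, 1 ≤ p.1 ∧ p.1 < p.2 ∧ p.2 ≤ j + 1 := by
      intro p hp
      rcases Finset.mem_insert.1 hp with rfl | hp
      · exact ⟨hk1, by omega, le_refl _⟩
      · have := inv.bounds p hp; omega
    have luniq' : ∀ p ∈ insert (k, j+1) st.2, ∀ q ∈ insert (k, j+1) st.2,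
        p.1 = q.1 → p = q := by
      intro p hp q hq he
      rcases Finset.mem_insert.1 hp with rfl | hp <;> rcases Finset.mem_insert.1 hq with rfl | hq
      · rfl
      · exact absurd (Finset.mem_image.2 ⟨q, hq, he.symm⟩) hkB
      · exact absurd (Finset.mem_image.2 ⟨p, hp, he⟩) hkB
      · exact inv.luniq p hp q hq he
    have runiq' : ∀ p ∈ insert (k, j+1) st.2, ∀ q ∈ insert (k, j+1) st.2,
        p.2 = q.2 → p = q := by
      intro p hp q hq he
      rcases Finset.mem_insert.1 hp with rfl | hp <;> rcases Finset.mem_insert.1 hq with rfl | hq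
      · rfl
      · have := inv.bounds q hq; simp only at he; omega
      · have := inv.bounds p hp; simp only at he; omega
      · exact inv.runiq p hp q hq he
    have rset' : rightSet (insert (k, j+1) st.2) = (rightSet A).filter (· ≤ j+1) := by
      rw [rightSet_insert]
      ext x
      simp only [Finset.mem_insert, inv.rset, Finset.mem_filter]
      constructor
      · rintro (rfl | ⟨h1, h2⟩)
        · exact ⟨hR, le_refl _⟩
        · exact ⟨h1, by omega⟩
      · rintro ⟨h1, h2⟩
        by_cases hx : x = j + 1
        · exact Or.inl hx
        · exact Or.inr ⟨h1, by omega⟩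
    have lsub' : ∀ x ∈ leftSet (insert (k, j+1) st.2), x ∈ leftSet A := by
      rw [leftSet_insert]
      intro x hx
      rcases Finset.mem_insert.1 hx with rfl | hx
      · exact hkL
      · exact inv.lsub x hx
    have hkj1 : (j+1) ∉ st.1.erase k := fun h => by
      have := hs_le _ (Finset.mem_of_mem_erase h); omega
    have hsj1 : (j+1) ∉ (sA A j).erase (opOf A (j+1)) := fun h => by
      have := mem_sA_le (Finset.mem_of_mem_erase h); omega
    have hnewleft : leftSet (insert (k, j+1) st.2) = insert k (leftSet st.2) :=
      leftSet_insert _ _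
    have smem_erase : ∀ x ∈ st.1.erase k,
        x ∈ leftSet A ∧ 1 ≤ x ∧ x ≤ j + 1 ∧ x ∉ leftSet (insert (k, j+1) st.2) := by
      intro x hx
      rcases Finset.mem_erase.1 hx with ⟨hne, hxs⟩
      obtain ⟨h1, h2, h3, h4⟩ := inv.smem x hxs
      refine ⟨h1, h2, by omega, ?_⟩
      rw [hnewleft]
      intro hmem
      rcases Finset.mem_insert.1 hmem with rfl | hmem
      · exact hne rfl
      · exact h4 hmem
    have hj1newleft : (j+1) ∉ leftSet (insert (k, j+1) st.2) := by
      rw [hnewleft]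
      intro hmem
      rcases Finset.mem_insert.1 hmem with he | hmem
      · omega
      · have := hleftB_le _ hmem; omega
    by_cases hL : (j+1) ∈ leftSet A
    · have hs' : (dstep (leftSet A) (rightSet A) c st (j+1)).1
          = insert (j+1) (st.1.erase k) := by simp [dstep, hR, hL, hkdef]
      rw [hs', hB']
      refine ⟨bounds', luniq', runiq', rset', ?_, lsub', ?_, ?_⟩
      · intro x hx
        rcases Finset.mem_insert.1 hx with rfl | hx
        · exact ⟨hL, by omega, le_refl _, hj1newleft⟩
        · exact smem_erase x hx
      · intro x hxL hxle
        by_cases hx : x = j + 1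
        · subst hx; exact Or.inl (Finset.mem_insert_self _ _)
        · rcases inv.lcov x hxL (by omega) with hxs | hxB
          · by_cases hxk : x = k
            · subst hxk
              exact Or.inr (by rw [hnewleft]; exact Finset.mem_insert_self _ _)
            · exact Or.inl (Finset.mem_insert_of_mem (Finset.mem_erase.2 ⟨hxk, hxs⟩))
          · exact Or.inr (by rw [hnewleft]; exact Finset.mem_insert_of_mem hxB)
      · rw [Finset.card_insert_of_notMem hkj1, Finset.card_erase_of_mem hkmem,
          sA_step hG j, if_pos hL, if_pos hR,
          Finset.card_insert_of_notMem hsj1, Finset.card_erase_of_mem hopOf]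
        have h3 := inv.scard
        have : 1 ≤ (sA A j).card := Finset.card_pos.2 ⟨_, hopOf⟩
        omega
    · have hs' : (dstep (leftSet A) (rightSet A) c st (j+1)).1 = st.1.erase k := by
        simp [dstep, hR, hL, hkdef]
      rw [hs', hB']
      refine ⟨bounds', luniq', runiq', rset', smem_erase, lsub', ?_, ?_⟩
      · intro x hxL hxle
        by_cases hx : x = j + 1
        · subst hx; exact absurd hxL hL
        · rcases inv.lcov x hxL (by omega) with hxs | hxB
          · by_cases hxk : x = k
            · subst hxk
              exact Or.inr (by rw [hnewleft]; exact Finset.mem_insert_self _ _)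
            · exact Or.inl (Finset.mem_erase.2 ⟨hxk, hxs⟩)
          · exact Or.inr (by rw [hnewleft]; exact Finset.mem_insert_of_mem hxB)
      · rw [Finset.card_erase_of_mem hkmem, sA_step hG j, if_neg hL, if_pos hR,
          Finset.card_erase_of_mem hopOf, inv.scard]
  · -- non-closer case
    have hB' : (dstep (leftSet A) (rightSet A) c st (j+1)).2 = st.2 := by
      simp [dstep, hR]
    have bounds' : ∀ p ∈ st.2, 1 ≤ p.1 ∧ p.1 < p.2 ∧ p.2 ≤ j + 1 := by
      intro p hp; have := inv.bounds p hp; omega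
    have rset' : rightSet st.2 = (rightSet A).filter (· ≤ j+1) := by
      rw [inv.rset]
      ext x
      simp only [Finset.mem_filter]
      constructor
      · rintro ⟨h1, h2⟩; exact ⟨h1, by omega⟩
      · rintro ⟨h1, h2⟩
        refine ⟨h1, ?_⟩
        by_cases hx : x = j + 1
        · subst hx; exact absurd h1 hR
        · omega
    by_cases hL : (j+1) ∈ leftSet A
    · have hs' : (dstep (leftSet A) (rightSet A) c st (j+1)).1 = insert (j+1) st.1 := by
        simp [dstep, hR, hL]
      have hj1s : (j+1) ∉ st.1 := fun h => by have := hs_le _ h; omega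
      have hj1sA : (j+1) ∉ sA A j := fun h => by have := mem_sA_le h; omega
      rw [hs', hB']
      refine ⟨bounds', inv.luniq, inv.runiq, rset', ?_, inv.lsub, ?_, ?_⟩
      · intro x hx
        rcases Finset.mem_insert.1 hx with rfl | hx
        · refine ⟨hL, by omega, le_refl _, fun h => by have := hleftB_le _ h; omega⟩
        · obtain ⟨h1, h2, h3, h4⟩ := inv.smem x hx
          exact ⟨h1, h2, by omega, h4⟩
      · intro x hxL hxle
        by_cases hx : x = j + 1
        · subst hx; exact Or.inl (Finset.mem_insert_self _ _)
        · rcases inv.lcov x hxL (by omega) with hxs | hxB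
          · exact Or.inl (Finset.mem_insert_of_mem hxs)
          · exact Or.inr hxB
      · rw [Finset.card_insert_of_notMem hj1s, sA_step hG j, if_pos hL, if_neg hR,
          Finset.card_insert_of_notMem hj1sA, inv.scard]
    · have hs' : (dstep (leftSet A) (rightSet A) c st (j+1)).1 = st.1 := by
        simp [dstep, hR, hL]
      rw [hs', hB']
      refine ⟨bounds', inv.luniq, inv.runiq, rset', ?_, inv.lsub, ?_, ?_⟩
      · intro x hx
        obtain ⟨h1, h2, h3, h4⟩ := inv.smem x hx
        exact ⟨h1, h2, by omega, h4⟩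
      · intro x hxL hxle
        by_cases hx : x = j + 1
        · subst hx; exact absurd hxL hL
        · exact inv.lcov x hxL (by omega)
      · rw [sA_step hG j, if_neg hL, if_neg hR, inv.scard]


lemma drun_inv {n : ℕ} {A : Finset (ℕ × ℕ)} (hG : Good n A)
    {c : ℕ → ℕ} (hc : ∀ j' ∈ rightSet A, 1 ≤ c j' ∧ c j' ≤ (openAt A j').card) :
    ∀ j, DInv n A j (drun (leftSet A) (rightSet A) c j).1
      (drun (leftSet A) (rightSet A) c j).2 := by
  intro j
  induction j with
  | zero =>
    show DInv n A 0 (∅ : Finset ℕ) (∅ : Finset (ℕ × ℕ))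
    refine ⟨?_, ?_, ?_, ?_, ?_, ?_, ?_, ?_⟩
    · intro p hp; exact absurd hp (Finset.notMem_empty p)
    · intro p hp; exact absurd hp (Finset.notMem_empty p)
    · intro p hp; exact absurd hp (Finset.notMem_empty p)
    · rw [rightSet, Finset.image_empty]
      ext x
      simp only [Finset.notMem_empty, false_iff, Finset.mem_filter]
      rintro ⟨hx, hx0⟩
      rcases Finset.mem_image.1 hx with ⟨p, hp, rfl⟩
      have := hG.1 p hp; omega
    · intro x hx; exact absurd hx (Finset.notMem_empty x)
    · intro x hx
      rw [leftSet, Finset.image_empty] at hx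
      exact absurd hx (Finset.notMem_empty x)
    · intro x hx hx0
      rcases Finset.mem_image.1 hx with ⟨p, hp, rfl⟩
      have := hG.1 p hp; omega
    · rw [sA_zero hG]
  | succ j ih => exact dstep_inv hG hc ih

section Trace

variable {n : ℕ} {A : Finset (ℕ × ℕ)} {c : ℕ → ℕ}

lemma drun_s_succ_subset {L R : Finset ℕ} (j : ℕ) :
    (drun L R c (j+1)).1 ⊆ insert (j+1) (drun L R c j).1 := by
  intro x hx
  simp only [drun, dstep] at hx
  split_ifs at hx with h1 h2 h3
  · rcases Finset.mem_insert.1 hx with rfl | hx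
    · exact Finset.mem_insert_self _ _
    · exact Finset.mem_insert_of_mem (Finset.mem_of_mem_erase hx)
  · rcases Finset.mem_insert.1 hx with rfl | hx
    · exact Finset.mem_insert_self _ _
    · exact Finset.mem_insert_of_mem hx
  · exact Finset.mem_insert_of_mem (Finset.mem_of_mem_erase hx)
  · exact Finset.mem_insert_of_mem hx

lemma drun_B_subset {L R : Finset ℕ} (j : ℕ) :
    (drun L R c j).2 ⊆ (drun L R c (j+1)).2 := by
  intro p hp
  simp only [drun, dstep]
  split_ifs
  · exact Finset.mem_insert_of_mem hp
  · exact hp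

lemma drun_B_new {L R : Finset ℕ} {j : ℕ} {p : ℕ × ℕ}
    (hp : p ∈ (drun L R c (j+1)).2) (hp' : p ∉ (drun L R c j).2) :
    (j+1) ∈ R ∧ p = (kth (drun L R c j).1 (c (j+1)), j+1) := by
  simp only [drun, dstep] at hp
  split_ifs at hp with h1
  · rcases Finset.mem_insert.1 hp with rfl | hp
    · exact ⟨h1, rfl⟩
    · exact absurd hp hp'
  · exact absurd hp hp'

lemma drun_s_back {L R : Finset ℕ} {j : ℕ} :
    ∀ m, j ≤ m → ∀ x ∈ (drun L R c m).1, x ≤ j → x ∈ (drun L R c j).1 := by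
  intro m
  induction m with
  | zero => intro hm x hx hxj; interval_cases j; exact hx
  | succ m ih =>
    intro hm x hx hxj
    rcases Nat.eq_or_lt_of_le hm with rfl | hlt
    · exact hx
    · have hx' := drun_s_succ_subset (c := c) (L := L) (R := R) m hx
      rcases Finset.mem_insert.1 hx' with rfl | hx'
      · omega
      · exact ih (by omega) x hx' hxj

lemma drun_B_back {L R : Finset ℕ} {j : ℕ} :
    ∀ m, j ≤ m → ∀ p ∈ (drun L R c m).2, p.2 ≤ j → p ∈ (drun L R c j).2 := by
  intro m
  induction m with
  | zero => intro hm p hp _; interval_cases j; exact hp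
  | succ m ih =>
    intro hm p hp hpj
    rcases Nat.eq_or_lt_of_le hm with rfl | hlt
    · exact hp
    · by_cases hpm : p ∈ (drun L R c m).2
      · exact ih (by omega) p hpm hpj
      · obtain ⟨-, rfl⟩ := drun_B_new hp hpm
        simp only at hpj
        omega

lemma drun_s_consumed {L R : Finset ℕ} {j : ℕ} {x : ℕ} :
    ∀ m, j ≤ m → x ∈ (drun L R c j).1 → x ∉ (drun L R c m).1 →
      ∃ j', j < j' ∧ j' ≤ m ∧ (x, j') ∈ (drun L R c m).2 := by
  intro m
  induction m with
  | zero =>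
    intro hm hx hx'
    interval_cases j
    exact absurd hx hx'
  | succ m ih =>
    intro hm hx hx'
    rcases Nat.eq_or_lt_of_le hm with rfl | hlt
    · exact absurd hx hx'
    · by_cases hxm : x ∈ (drun L R c m).1
      · -- x consumed exactly at step m+1
        have key : (x, m+1) ∈ (drun L R c (m+1)).2 := by
          have hx2 : x ∉ (drun L R c (m+1)).1 := hx'
          show (x, m+1) ∈ (dstep L R c (drun L R c m) (m+1)).2
          have hx3 : x ∉ (dstep L R c (drun L R c m) (m+1)).1 := hx2
          simp only [dstep] at hx3 ⊢
          by_cases h1 : (m+1) ∈ L <;> by_cases h2 : (m+1) ∈ R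
          · rw [if_pos h1, if_pos h2] at hx3
            rw [if_pos h2]
            by_cases hxe : x ∈ (drun L R c m).1.erase (kth (drun L R c m).1 (c (m+1)))
            · exact absurd (Finset.mem_insert_of_mem hxe) hx3
            · have hxk : x = kth (drun L R c m).1 (c (m+1)) := by
                by_contra hne
                exact hxe (Finset.mem_erase.2 ⟨hne, hxm⟩)
              rw [← hxk]
              exact Finset.mem_insert_self _ _
          · rw [if_pos h1, if_neg h2] at hx3
            exact absurd (Finset.mem_insert_of_mem hxm) hx3
          · rw [if_neg h1, if_pos h2] at hx3
            rw [if_pos h2]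
            by_cases hxe : x ∈ (drun L R c m).1.erase (kth (drun L R c m).1 (c (m+1)))
            · exact absurd hxe hx3
            · have hxk : x = kth (drun L R c m).1 (c (m+1)) := by
                by_contra hne
                exact hxe (Finset.mem_erase.2 ⟨hne, hxm⟩)
              rw [← hxk]
              exact Finset.mem_insert_self _ _
          · rw [if_neg h1, if_neg h2] at hx3
            exact absurd hxm hx3
        exact ⟨m+1, by omega, le_refl _, key⟩
      · obtain ⟨j', h1, h2, h3⟩ := ih (by omega) hx hxm
        exact ⟨j', h1, by omega, drun_B_subset m h3⟩

end Trace


section Master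

variable {n : ℕ} {A : Finset (ℕ × ℕ)} {c : ℕ → ℕ}

lemma sA_top (hG : Good n A) : sA A n = ∅ := by
  ext x
  simp only [Finset.notMem_empty, iff_false, mem_sA]
  rintro ⟨p, hp, rfl, h1, h2⟩
  have := hG.1 p hp; omega

lemma drun_sn (hG : Good n A)
    (hc : ∀ j' ∈ rightSet A, 1 ≤ c j' ∧ c j' ≤ (openAt A j').card) :
    (drun (leftSet A) (rightSet A) c n).1 = ∅ := by
  apply Finset.card_eq_zero.1
  rw [(drun_inv hG hc n).scard, sA_top hG]
  rfl

lemma drun_good (hG : Good n A)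
    (hc : ∀ j' ∈ rightSet A, 1 ≤ c j' ∧ c j' ≤ (openAt A j').card) :
    Good n (drun (leftSet A) (rightSet A) c n).2 := by
  have inv := drun_inv hG hc n
  exact ⟨inv.bounds, inv.luniq, inv.runiq⟩

lemma drun_rightSet (hG : Good n A)
    (hc : ∀ j' ∈ rightSet A, 1 ≤ c j' ∧ c j' ≤ (openAt A j').card) :
    rightSet (drun (leftSet A) (rightSet A) c n).2 = rightSet A := by
  rw [(drun_inv hG hc n).rset]
  ext x
  simp only [Finset.mem_filter, and_iff_left_iff_imp]
  intro hx
  rcases Finset.mem_image.1 hx with ⟨p, hp, rfl⟩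
  exact (hG.1 p hp).2.2

lemma drun_leftSet (hG : Good n A)
    (hc : ∀ j' ∈ rightSet A, 1 ≤ c j' ∧ c j' ≤ (openAt A j').card) :
    leftSet (drun (leftSet A) (rightSet A) c n).2 = leftSet A := by
  have inv := drun_inv hG hc n
  apply Finset.Subset.antisymm
  · intro x hx; exact inv.lsub x hx
  · intro x hx
    have hxn : x ≤ n := by
      rcases Finset.mem_image.1 hx with ⟨p, hp, rfl⟩
      have := hG.1 p hp; omega
    rcases inv.lcov x hx hxn with hs | hB
    · rw [drun_sn hG hc] at hs
      exact absurd hs (Finset.notMem_empty x)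
    · exact hB

lemma drun_opener (hG : Good n A)
    (hc : ∀ j' ∈ rightSet A, 1 ≤ c j' ∧ c j' ≤ (openAt A j').card)
    {p : ℕ × ℕ} (hp : p ∈ (drun (leftSet A) (rightSet A) c n).2) :
    p.2 ∈ rightSet A ∧ p.1 = kth (drun (leftSet A) (rightSet A) c (p.2 - 1)).1 (c p.2) ∧
      p.1 ∈ (drun (leftSet A) (rightSet A) c (p.2 - 1)).1 := by
  have inv := drun_inv hG hc
  have hb := (inv n).bounds p hp
  obtain ⟨t, ht⟩ : ∃ t, p.2 = t + 1 := ⟨p.2 - 1, by omega⟩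
  have hpt : p ∈ (drun (leftSet A) (rightSet A) c (t+1)).2 :=
    drun_B_back n (by omega) p hp (by omega)
  have hpt' : p ∉ (drun (leftSet A) (rightSet A) c t).2 := by
    intro h
    have := (inv t).bounds p h; omega
  obtain ⟨hR, hpe⟩ := drun_B_new hpt hpt'
  rw [← ht] at hR
  have hcb := hc _ hR
  have hcard : (openAt A p.2).card = (drun (leftSet A) (rightSet A) c t).1.card := by
    rw [(inv t).scard, ht, openAt_succ]
  have hkmem : kth (drun (leftSet A) (rightSet A) c t).1 (c (t+1))
      ∈ (drun (leftSet A) (rightSet A) c t).1 := by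
    apply (kth_spec (by rw [← ht]; exact hcb.1) _).1
    rw [← ht]; omega
  have ht' : p.2 - 1 = t := by omega
  rw [ht']
  refine ⟨hR, ?_, ?_⟩
  · rw [ht]
    exact congrArg Prod.fst hpe
  · have : p.1 = kth (drun (leftSet A) (rightSet A) c t).1 (c (t+1)) :=
      congrArg Prod.fst hpe
    rw [this]
    exact hkmem

lemma drun_openAt (hG : Good n A)
    (hc : ∀ j' ∈ rightSet A, 1 ≤ c j' ∧ c j' ≤ (openAt A j').card)
    {j : ℕ} (hj : j ∈ rightSet A) :
    openAt (drun (leftSet A) (rightSet A) c n).2 j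
      = (drun (leftSet A) (rightSet A) c (j-1)).1 := by
  have inv := drun_inv hG hc
  have hj2 : 2 ≤ j ∧ j ≤ n := by
    rcases Finset.mem_image.1 hj with ⟨p, hp, rfl⟩
    have := hG.1 p hp; omega
  obtain ⟨t, rfl⟩ : ∃ t, j = t + 1 := ⟨j - 1, by omega⟩
  have ht' : t + 1 - 1 = t := by omega
  rw [ht']
  ext x
  constructor
  · intro hx
    rcases Finset.mem_image.1 hx with ⟨p, hp, rfl⟩
    rcases Finset.mem_filter.1 hp with ⟨hpB, h1, h2⟩
    obtain ⟨-, -, hmem⟩ := drun_opener hG hc hpB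
    exact drun_s_back (p.2 - 1) (by omega) p.1 hmem (by omega)
  · intro hx
    have hxt : x ≤ t := ((inv t).smem x hx).2.2.1
    have hxn : x ∉ (drun (leftSet A) (rightSet A) c n).1 := by
      rw [drun_sn hG hc]; exact Finset.notMem_empty x
    obtain ⟨j', h1, h2, h3⟩ := drun_s_consumed n (by omega) hx hxn
    exact Finset.mem_image.2 ⟨(x, j'), Finset.mem_filter.2 ⟨h3, by omega, by omega⟩, rfl⟩

lemma drun_card_rk (hG : Good n A)
    (hc : ∀ j' ∈ rightSet A, 1 ≤ c j' ∧ c j' ≤ (openAt A j').card)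
    {j : ℕ} (hj : j ∈ rightSet A) :
    (openAt (drun (leftSet A) (rightSet A) c n).2 j).card = (openAt A j).card ∧
      rk (drun (leftSet A) (rightSet A) c n).2 j = c j := by
  have inv := drun_inv hG hc
  have hj2 : 2 ≤ j ∧ j ≤ n := by
    rcases Finset.mem_image.1 hj with ⟨p, hp, rfl⟩
    have := hG.1 p hp; omega
  have hcard : (openAt A j).card = (drun (leftSet A) (rightSet A) c (j-1)).1.card := by
    have h0 : j = (j - 1) + 1 := by omega
    rw [(inv (j-1)).scard]
    conv_lhs => rw [h0, openAt_succ]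
  constructor
  · rw [drun_openAt hG hc hj, hcard]
  · have hjB : j ∈ rightSet (drun (leftSet A) (rightSet A) c n).2 := by
      rw [drun_rightSet hG hc]; exact hj
    have hspec := opOf_spec hjB
    obtain ⟨-, hkth, -⟩ := drun_opener hG hc hspec
    simp only at hkth
    rw [rk, drun_openAt hG hc hj, hkth]
    exact (kth_spec (hc _ hj).1 (by rw [← hcard]; exact (hc _ hj).2)).2

end Master


lemma filter_zero {n : ℕ} {A : Finset (ℕ × ℕ)} (hG : Good n A) :
    A.filter (fun p => p.2 ≤ 0) = ∅ := by
  ext p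
  simp only [Finset.mem_filter, Finset.notMem_empty, iff_false, not_and]
  intro hp
  have := hG.1 p hp; omega

lemma drun_recon {n : ℕ} {A : Finset (ℕ × ℕ)} (hG : Good n A) (j : ℕ) :
    drun (leftSet A) (rightSet A) (rk A) j = (sA A j, A.filter (fun p => p.2 ≤ j)) := by
  induction j with
  | zero =>
    show ((∅ : Finset ℕ), (∅ : Finset (ℕ × ℕ))) = _
    rw [sA_zero hG, filter_zero hG]
  | succ j ih =>
    show dstep (leftSet A) (rightSet A) (rk A) (drun (leftSet A) (rightSet A) (rk A) j) (j+1)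
      = _
    rw [ih]
    simp only [dstep]
    rw [Prod.mk.injEq]
    by_cases hR : (j+1) ∈ rightSet A
    · have hopen : openAt A (j+1) = sA A j := openAt_succ j
      have hopOf : opOf A (j+1) ∈ sA A j := by
        rw [← hopen]; exact opOf_mem_openAt hG hR
      have hkth : kth (sA A j) (rk A (j+1)) = opOf A (j+1) := by
        rw [rk, hopen]
        exact kth_rank hopOf
      constructor
      · rw [if_pos hR, hkth, sA_step hG j, if_pos hR]
      · rw [if_pos hR, hkth]
        ext p
        simp only [Finset.mem_insert, Finset.mem_filter]
        constructor
        · rintro (rfl | ⟨hp, hple⟩)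
          · exact ⟨opOf_spec hR, le_refl _⟩
          · exact ⟨hp, by omega⟩
        · rintro ⟨hp, hple⟩
          by_cases hp2 : p.2 = j + 1
          · exact Or.inl (opOf_eq hG hp hp2)
          · exact Or.inr ⟨hp, by omega⟩
    · constructor
      · rw [if_neg hR, sA_step hG j, if_neg hR]
      · rw [if_neg hR]
        ext p
        simp only [Finset.mem_filter]
        constructor
        · rintro ⟨hp, hple⟩; exact ⟨hp, by omega⟩
        · rintro ⟨hp, hple⟩
          refine ⟨hp, ?_⟩
          by_cases hp2 : p.2 = j + 1
          · exact absurd (Finset.mem_image.2 ⟨p, hp, hp2⟩) hR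
          · omega


def cOf (A : Finset (ℕ × ℕ)) (j : ℕ) : ℕ := (openAt A j).card + 1 - rk A j

def phiA (n : ℕ) (A : Finset (ℕ × ℕ)) : Finset (ℕ × ℕ) :=
  (drun (leftSet A) (rightSet A) (cOf A) n).2

section Phi

variable {n : ℕ} {A : Finset (ℕ × ℕ)}

lemma cOf_bounds (hG : Good n A) :
    ∀ j ∈ rightSet A, 1 ≤ cOf A j ∧ cOf A j ≤ (openAt A j).card := by
  intro j hj
  have := rk_bounds hG hj
  unfold cOf
  omega

lemma phiA_good (hG : Good n A) : Good n (phiA n A) := drun_good hG (cOf_bounds hG)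

lemma phiA_left (hG : Good n A) : leftSet (phiA n A) = leftSet A :=
  drun_leftSet hG (cOf_bounds hG)

lemma phiA_right (hG : Good n A) : rightSet (phiA n A) = rightSet A :=
  drun_rightSet hG (cOf_bounds hG)

lemma phiA_card_rk (hG : Good n A) {j : ℕ} (hj : j ∈ rightSet A) :
    (openAt (phiA n A) j).card = (openAt A j).card ∧ rk (phiA n A) j = cOf A j :=
  drun_card_rk hG (cOf_bounds hG) hj

lemma filter_all {A : Finset (ℕ × ℕ)} (hG : Good n A) :
    A.filter (fun p => p.2 ≤ n) = A := by
  apply Finset.filter_true_of_mem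
  intro p hp
  exact (hG.1 p hp).2.2

lemma phiA_invol (hG : Good n A) : phiA n (phiA n A) = A := by
  have hGB := phiA_good hG
  have hcongr : ∀ j ∈ rightSet A, cOf (phiA n A) j = rk A j := by
    intro j hj
    obtain ⟨h1, h2⟩ := phiA_card_rk hG hj
    have h3 := rk_bounds hG hj
    unfold cOf at *
    omega
  show (drun (leftSet (phiA n A)) (rightSet (phiA n A)) (cOf (phiA n A)) n).2 = A
  rw [phiA_left hG, phiA_right hG, drun_congr hcongr n, drun_recon hG n]
  exact filter_all hG

lemma phiA_cross (hG : Good n A) : crossCount (phiA n A) = nestCount A := by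
  rw [crossCount_eq (phiA_good hG), nestCount_eq hG, phiA_right hG]
  apply Finset.sum_congr rfl
  intro j hj
  obtain ⟨h1, h2⟩ := phiA_card_rk hG hj
  have h3 := rk_bounds hG hj
  rw [h1, h2]
  unfold cOf
  omega

lemma phiA_nest (hG : Good n A) : nestCount (phiA n A) = crossCount A := by
  rw [nestCount_eq (phiA_good hG), crossCount_eq hG, phiA_right hG]
  apply Finset.sum_congr rfl
  intro j hj
  obtain ⟨h1, h2⟩ := phiA_card_rk hG hj
  have h3 := rk_bounds hG hj
  rw [h2]
  unfold cOf
  omega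

end Phi


section Reach

variable {n : ℕ} {A : Finset (ℕ × ℕ)}

def AReach (A : Finset (ℕ × ℕ)) : ℕ → ℕ → Prop :=
  Relation.ReflTransGen (fun a b => (a, b) ∈ A)

def SB (A : Finset (ℕ × ℕ)) (i j : ℕ) : Prop := ∃ m, AReach A m i ∧ AReach A m j

lemma reach_le (hG : Good n A) {a b : ℕ} (h : AReach A a b) : a ≤ b := by
  induction h with
  | refl => exact le_refl _
  | tail h e ih =>
    have := hG.1 _ e
    simp only at this
    omega

lemma reach_deter (hG : Good n A) {a c : ℕ} (hac : AReach A a c) :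
    ∀ {b : ℕ}, AReach A b c → AReach A a b ∨ AReach A b a := by
  induction hac with
  | refl => intro b hbc; exact Or.inr hbc
  | @tail c' c h e ih =>
    intro b hbc
    rcases Relation.ReflTransGen.cases_tail hbc with rfl | ⟨d, hbd, hdc⟩
    · exact Or.inl (h.tail e)
    · have hcd : c' = d := by
        have := hG.2.2 (c', c) e (d, c) hdc rfl
        exact congrArg Prod.fst this
      exact ih (hcd ▸ hbd)

lemma reach_fwd (hG : Good n A) {m x y : ℕ} (hmx : AReach A m x) :
    AReach A m y → AReach A x y ∨ AReach A y x := by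
  induction hmx using Relation.ReflTransGen.head_induction_on with
  | refl => intro h; exact Or.inl h
  | @head a b e h ih =>
    intro hmy
    rcases Relation.ReflTransGen.cases_head hmy with he | ⟨d, e', h'⟩
    · subst he
      exact Or.inr (Relation.ReflTransGen.head e h)
    · have hbd : b = d := by
        have := hG.2.1 (a, b) e (a, d) e' rfl
        exact congrArg Prod.snd this
      exact ih (hbd ▸ h')

lemma sb_symm {i j : ℕ} (h : SB A i j) : SB A j i := by
  obtain ⟨m, h1, h2⟩ := h; exact ⟨m, h2, h1⟩

lemma sb_trans (hG : Good n A) {i x j : ℕ} (h1 : SB A i x) (h2 : SB A x j) : SB A i j := by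
  obtain ⟨m, hmi, hmx⟩ := h1
  obtain ⟨m', hmx', hmj⟩ := h2
  rcases reach_deter hG hmx hmx' with h | h
  · exact ⟨m, hmi, h.trans hmj⟩
  · exact ⟨m', h.trans hmi, hmj⟩

lemma sb_refl (i : ℕ) : SB A i i := ⟨i, Relation.ReflTransGen.refl, Relation.ReflTransGen.refl⟩

def ofArcs (n : ℕ) (A : Finset (ℕ × ℕ)) (hG : Good n A) : SetPartitionA n where
  blocks := (Finset.Icc 1 n).image (fun i => (Finset.Icc 1 n).filter (SB A i))
  nonempty := by
    intro B hB
    rcases Finset.mem_image.1 hB with ⟨i, hi, rfl⟩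
    exact ⟨i, Finset.mem_filter.2 ⟨hi, sb_refl i⟩⟩
  disj := by
    intro B hB B' hB' hne
    rcases Finset.mem_image.1 hB with ⟨i, hi, rfl⟩
    rcases Finset.mem_image.1 hB' with ⟨i', hi', rfl⟩
    rw [Finset.disjoint_left]
    intro x hx hx'
    apply hne
    have hx1 : SB A i x := (Finset.mem_filter.1 hx).2
    have hx2 : SB A i' x := (Finset.mem_filter.1 hx').2
    have hii' : ∀ y, SB A i y ↔ SB A i' y := by
      intro y
      constructor
      · intro h
        exact sb_trans hG (sb_trans hG hx2 (sb_symm hx1)) h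
      · intro h
        exact sb_trans hG (sb_trans hG hx1 (sb_symm hx2)) h
    apply Finset.filter_congr
    intro y _
    exact hii' y
  cover := by
    intro i
    constructor
    · rintro ⟨B, hB, hiB⟩
      rcases Finset.mem_image.1 hB with ⟨i', hi', rfl⟩
      exact (Finset.mem_filter.1 hiB).1
    · intro hi
      refine ⟨(Finset.Icc 1 n).filter (SB A i), Finset.mem_image.2 ⟨i, hi, rfl⟩, ?_⟩
      exact Finset.mem_filter.2 ⟨hi, sb_refl i⟩

end Reach


section Corresp

variable {n : ℕ}

lemma mem_Icc_of_mem_block (P : SetPartitionA n) {B : Finset ℕ} (hB : B ∈ P.blocks) {x : ℕ}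
    (hx : x ∈ B) : x ∈ Finset.Icc 1 n := (P.cover x).1 ⟨B, hB, hx⟩

lemma arcs_good (P : SetPartitionA n) : Good n P.arcs := by
  refine ⟨?_, ?_, ?_⟩
  · intro p hp
    rcases Finset.mem_filter.1 hp with ⟨hpp, hlt, -⟩
    rcases Finset.mem_product.1 hpp with ⟨h1, h2⟩
    rw [Finset.mem_Icc] at h1 h2
    exact ⟨h1.1, hlt, h2.2⟩
  · intro p hp q hq he
    rcases Finset.mem_filter.1 hp with ⟨-, hlt, B, hB, h1, h2, hmax⟩
    rcases Finset.mem_filter.1 hq with ⟨-, hlt', B', hB', h1', h2', hmax'⟩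
    have hBB : B = B' := by
      by_contra hne
      have hm : p.1 ∈ B' := by rw [he]; exact h1'
      exact Finset.disjoint_left.1 (P.disj B hB B' hB' hne) h1 hm
    subst hBB
    have h22 : p.2 = q.2 := by
      rcases lt_trichotomy p.2 q.2 with h | h | h
      · exact absurd ⟨by omega, h⟩ (hmax' p.2 h2)
      · exact h
      · exact absurd ⟨by omega, h⟩ (hmax q.2 h2')
    exact Prod.ext he h22
  · intro p hp q hq he
    rcases Finset.mem_filter.1 hp with ⟨-, hlt, B, hB, h1, h2, hmax⟩
    rcases Finset.mem_filter.1 hq with ⟨-, hlt', B', hB', h1', h2', hmax'⟩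
    have hBB : B = B' := by
      by_contra hne
      have hm : p.2 ∈ B' := by rw [he]; exact h2'
      exact Finset.disjoint_left.1 (P.disj B hB B' hB' hne) h2 hm
    subst hBB
    have h11 : p.1 = q.1 := by
      rcases lt_trichotomy p.1 q.1 with h | h | h
      · exact absurd ⟨h, by omega⟩ (hmax q.1 h1')
      · exact h
      · exact absurd ⟨h, by omega⟩ (hmax' p.1 h1)
    exact Prod.ext h11 he

lemma block_arc (P : SetPartitionA n) {B : Finset ℕ} (hB : B ∈ P.blocks) {x y : ℕ}
    (hx : x ∈ B) (hy : y ∈ B) (hxy : x < y) :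
    ∃ m ∈ B, x < m ∧ m ≤ y ∧ (x, m) ∈ P.arcs := by
  have hne : (B.filter (fun k => x < k)).Nonempty := ⟨y, Finset.mem_filter.2 ⟨hy, hxy⟩⟩
  obtain ⟨hmB, hxm⟩ := Finset.mem_filter.1 (Finset.min'_mem _ hne)
  have hmy : (B.filter (fun k => x < k)).min' hne ≤ y :=
    Finset.min'_le _ _ (Finset.mem_filter.2 ⟨hy, hxy⟩)
  refine ⟨_, hmB, hxm, hmy, ?_⟩
  refine Finset.mem_filter.2 ⟨Finset.mem_product.2 ⟨mem_Icc_of_mem_block P hB hx,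
    mem_Icc_of_mem_block P hB hmB⟩, ?_⟩
  refine ⟨hxm, B, hB, hx, hmB, fun k hk hcon => ?_⟩
  have h1 : x < k := hcon.1
  have h2 : k < (B.filter (fun k => x < k)).min' hne := hcon.2
  have h3 := Finset.min'_le (B.filter (fun k => x < k)) k (Finset.mem_filter.2 ⟨hk, h1⟩)
  omega

lemma block_reach (P : SetPartitionA n) {B : Finset ℕ} (hB : B ∈ P.blocks) :
    ∀ d x y, x ∈ B → y ∈ B → x ≤ y → y - x ≤ d → AReach P.arcs x y := by
  intro d
  induction d with
  | zero =>
    intro x y hx hy hle hd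
    have : x = y := by omega
    subst this
    exact Relation.ReflTransGen.refl
  | succ d ih =>
    intro x y hx hy hle hd
    rcases eq_or_lt_of_le hle with rfl | hlt
    · exact Relation.ReflTransGen.refl
    · obtain ⟨m, hmB, h1, h2, harc⟩ := block_arc P hB hx hy hlt
      exact Relation.ReflTransGen.head harc (ih m y hmB hy h2 (by omega))

lemma reach_block_fwd (P : SetPartitionA n) {a b : ℕ} (h : AReach P.arcs a b) :
    ∀ B ∈ P.blocks, a ∈ B → b ∈ B := by
  induction h with
  | refl => intro B _ h; exact h
  | @tail b c h e ih =>
    intro B hB haB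
    have hbB := ih B hB haB
    rcases Finset.mem_filter.1 e with ⟨-, hlt, B', hB', hbB', hcB', -⟩
    have hBB : B = B' := by
      by_contra hne
      exact Finset.disjoint_left.1 (P.disj B hB B' hB' hne) hbB hbB'
    rw [hBB]; exact hcB'

lemma reach_block_bwd (P : SetPartitionA n) {a b : ℕ} (h : AReach P.arcs a b) :
    ∀ B ∈ P.blocks, b ∈ B → a ∈ B := by
  induction h with
  | refl => intro B _ h; exact h
  | @tail b c h e ih =>
    intro B hB hcB
    rcases Finset.mem_filter.1 e with ⟨-, hlt, B', hB', hbB', hcB', -⟩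
    have hBB : B = B' := by
      by_contra hne
      exact Finset.disjoint_left.1 (P.disj B hB B' hB' hne) hcB hcB'
    exact ih B hB (by rw [hBB]; exact hbB')

lemma block_eq_filter (P : SetPartitionA n) {B : Finset ℕ} (hB : B ∈ P.blocks) {i : ℕ}
    (hiB : i ∈ B) : (Finset.Icc 1 n).filter (SB P.arcs i) = B := by
  ext j
  simp only [Finset.mem_filter]
  constructor
  · rintro ⟨hj, m, hmi, hmj⟩
    have hmB : m ∈ B := reach_block_bwd P hmi B hB hiB
    exact reach_block_fwd P hmj B hB hmB
  · intro hjB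
    refine ⟨mem_Icc_of_mem_block P hB hjB, ?_⟩
    rcases le_total i j with h | h
    · exact ⟨i, Relation.ReflTransGen.refl,
        block_reach P hB (j - i) i j hiB hjB h (le_refl _)⟩
    · exact ⟨j, block_reach P hB (i - j) j i hjB hiB h (le_refl _),
        Relation.ReflTransGen.refl⟩

lemma blocks_eq (P : SetPartitionA n) :
    P.blocks = (Finset.Icc 1 n).image (fun i => (Finset.Icc 1 n).filter (SB P.arcs i)) := by
  ext B
  constructor
  · intro hB
    obtain ⟨i, hiB⟩ := P.nonempty B hB
    exact Finset.mem_image.2 ⟨i, mem_Icc_of_mem_block P hB hiB, block_eq_filter P hB hiB⟩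
  · intro hB
    rcases Finset.mem_image.1 hB with ⟨i, hi, rfl⟩
    obtain ⟨B', hB', hiB'⟩ := (P.cover i).2 hi
    rw [block_eq_filter P hB' hiB']
    exact hB'

lemma partition_ext {P Q : SetPartitionA n} (h : P.blocks = Q.blocks) : P = Q := by
  cases P
  cases Q
  simp only at h
  subst h
  rfl

end Corresp


section Corresp2

variable {n : ℕ}

lemma arcs_ofArcs {A : Finset (ℕ × ℕ)} (hG : Good n A) : (ofArcs n A hG).arcs = A := by
  ext p
  constructor
  · intro hp
    rcases Finset.mem_filter.1 hp with ⟨hpp, hlt, B, hB, h1, h2, hmax⟩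
    rcases Finset.mem_image.1 hB with ⟨i, hi, rfl⟩
    have hsb1 : SB A i p.1 := (Finset.mem_filter.1 h1).2
    have hsb2 : SB A i p.2 := (Finset.mem_filter.1 h2).2
    have hsb : SB A p.1 p.2 := sb_trans hG (sb_symm hsb1) hsb2
    obtain ⟨m, hm1, hm2⟩ := hsb
    have hr : AReach A p.1 p.2 := by
      rcases reach_fwd hG hm1 hm2 with h | h
      · exact h
      · exact absurd (reach_le hG h) (by omega)
    rcases Relation.ReflTransGen.cases_head hr with he | ⟨z, e, hz⟩
    · exact absurd he (by omega)
    · have hzb := hG.1 _ e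
      simp only at hzb
      have hzle := reach_le hG hz
      have hzB : z ∈ (Finset.Icc 1 n).filter (SB A i) := by
        refine Finset.mem_filter.2 ⟨Finset.mem_Icc.2 ⟨by omega, hzb.2.2⟩, ?_⟩
        exact sb_trans hG hsb1
          ⟨p.1, Relation.ReflTransGen.refl, Relation.ReflTransGen.single e⟩
      have hze : z = p.2 := by
        by_contra hne
        exact hmax z hzB ⟨hzb.2.1, by omega⟩
      have hpe : p = (p.1, z) := by rw [hze]
      rw [hpe]
      exact e
  · intro hp
    have hb := hG.1 p hp
    have hp' : (p.1, p.2) ∈ A := by rw [Prod.mk.eta]; exact hp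
    refine Finset.mem_filter.2 ⟨Finset.mem_product.2
      ⟨Finset.mem_Icc.2 ⟨hb.1, by omega⟩, Finset.mem_Icc.2 ⟨by omega, hb.2.2⟩⟩, ?_⟩
    refine ⟨hb.2.1, (Finset.Icc 1 n).filter (SB A p.1),
      Finset.mem_image.2 ⟨p.1, Finset.mem_Icc.2 ⟨hb.1, by omega⟩, rfl⟩,
      Finset.mem_filter.2 ⟨Finset.mem_Icc.2 ⟨hb.1, by omega⟩, sb_refl _⟩,
      Finset.mem_filter.2 ⟨Finset.mem_Icc.2 ⟨by omega, hb.2.2⟩,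
        ⟨p.1, Relation.ReflTransGen.refl, Relation.ReflTransGen.single hp'⟩⟩, ?_⟩
    intro k hk hcon
    have hsb : SB A p.1 k := (Finset.mem_filter.1 hk).2
    obtain ⟨m, hm1, hm2⟩ := hsb
    rcases reach_fwd hG hm1 hm2 with h | h
    · rcases Relation.ReflTransGen.cases_head h with he | ⟨z, e, hz⟩
      · omega
      · have hze : (p.1, z) = (p.1, p.2) := hG.2.1 (p.1, z) e (p.1, p.2) hp' rfl
        have hz2 : z = p.2 := congrArg Prod.snd hze
        have := reach_le hG hz
        omega
    · have := reach_le hG h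
      omega

lemma block_arc' (P : SetPartitionA n) {B : Finset ℕ} (hB : B ∈ P.blocks) {x y : ℕ}
    (hx : x ∈ B) (hy : y ∈ B) (hxy : x < y) :
    ∃ m ∈ B, x ≤ m ∧ m < y ∧ (m, y) ∈ P.arcs := by
  have hxS : x ∈ B.filter (fun k => k < y) := Finset.mem_filter.2 ⟨hx, hxy⟩
  have hne : (B.filter (fun k => k < y)).Nonempty := ⟨x, hxS⟩
  obtain ⟨hmB, hmy⟩ := Finset.mem_filter.1 (Finset.max'_mem _ hne)
  have hxm : x ≤ (B.filter (fun k => k < y)).max' hne := Finset.le_max' _ _ hxS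
  refine ⟨_, hmB, hxm, hmy, ?_⟩
  refine Finset.mem_filter.2 ⟨Finset.mem_product.2 ⟨mem_Icc_of_mem_block P hB hmB,
    mem_Icc_of_mem_block P hB hy⟩, ?_⟩
  refine ⟨hmy, B, hB, hmB, hy, fun k hk hcon => ?_⟩
  have h1 : (B.filter (fun k => k < y)).max' hne < k := hcon.1
  have h2 : k < y := hcon.2
  have h3 := Finset.le_max' (B.filter (fun k => k < y)) k (Finset.mem_filter.2 ⟨hk, h2⟩)
  omega

lemma openers_eq (P : SetPartitionA n) : P.openers = leftSet P.arcs := by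
  ext i
  simp only [SetPartitionA.openers, Finset.mem_filter, leftSet, Finset.mem_image]
  constructor
  · rintro ⟨hIcc, B, hB, hiB, j, hjB, hij⟩
    obtain ⟨m, hmB, h1, h2, harc⟩ := block_arc P hB hiB hjB hij
    exact ⟨(i, m), harc, rfl⟩
  · rintro ⟨p, hp, rfl⟩
    rcases Finset.mem_filter.1 hp with ⟨hpp, hlt, B, hB, h1, h2, -⟩
    exact ⟨(Finset.mem_product.1 hpp).1, B, hB, h1, p.2, h2, hlt⟩

lemma closers_eq (P : SetPartitionA n) : P.closers = rightSet P.arcs := by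
  ext i
  simp only [SetPartitionA.closers, Finset.mem_filter, rightSet, Finset.mem_image]
  constructor
  · rintro ⟨hIcc, B, hB, hiB, j, hjB, hij⟩
    obtain ⟨m, hmB, h1, h2, harc⟩ := block_arc' P hB hjB hiB hij
    exact ⟨(m, i), harc, rfl⟩
  · rintro ⟨p, hp, rfl⟩
    rcases Finset.mem_filter.1 hp with ⟨hpp, hlt, B, hB, h1, h2, -⟩
    exact ⟨(Finset.mem_product.1 hpp).2, B, hB, h2, p.1, h1, hlt⟩

end Corresp2


section Final

variable {n : ℕ}

lemma ofArcs_congr {A A' : Finset (ℕ × ℕ)} (h : A = A') (hG : Good n A) (hG' : Good n A') :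
    ofArcs n A hG = ofArcs n A' hG' := by subst h; rfl

lemma eq_ofArcs (P : SetPartitionA n) : P = ofArcs n P.arcs (arcs_good P) :=
  partition_ext (blocks_eq P)

def phiP (n : ℕ) (P : SetPartitionA n) : SetPartitionA n :=
  ofArcs n (phiA n P.arcs) (phiA_good (arcs_good P))

lemma phiP_arcs (P : SetPartitionA n) : (phiP n P).arcs = phiA n P.arcs :=
  arcs_ofArcs _

lemma phiP_invol : Function.Involutive (phiP n) := by
  intro P
  have hG := arcs_good P
  have h1 : phiA n ((phiP n P).arcs) = P.arcs := by
    rw [phiP_arcs]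
    exact phiA_invol hG
  show ofArcs n (phiA n ((phiP n P).arcs)) _ = P
  rw [ofArcs_congr h1 _ (by rw [h1] at *; exact hG)]
  exact (eq_ofArcs P).symm

end Final

end KZ

theorem stmt1 (n : ℕ) (hn : 0 < n) :
    ∃ Φ : SetPartitionA n → SetPartitionA n, Function.Bijective Φ ∧
      ∀ P : SetPartitionA n,
        (Φ P).openers = P.openers ∧ (Φ P).closers = P.closers ∧
        (Φ P).crossings = P.nestings ∧ (Φ P).nestings = P.crossings := by
  refine ⟨KZ.phiP n, KZ.phiP_invol.bijective, ?_⟩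
  intro P
  have hG := KZ.arcs_good P
  refine ⟨?_, ?_, ?_, ?_⟩
  · rw [KZ.openers_eq, KZ.openers_eq, KZ.phiP_arcs, KZ.phiA_left hG]
  · rw [KZ.closers_eq, KZ.closers_eq, KZ.phiP_arcs, KZ.phiA_right hG]
  · show KZ.crossCount ((KZ.phiP n P).arcs) = KZ.nestCount P.arcs
    rw [KZ.phiP_arcs]
    exact KZ.phiA_cross hG
  · show KZ.nestCount ((KZ.phiP n P).arcs) = KZ.crossCount P.arcs
    rw [KZ.phiP_arcs]
    exact KZ.phiA_nest hG
end
end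

section
/- For every positive integer n and every opener-closer configuration (O,C) ⊆ [n] × [n], there exists a unique non-crossing set partition 𝓑 of [n] and a unique non-nesting set partition 𝓑' of [n] such that op(𝓑) = op(𝓑') = O and cl(𝓑) = cl(𝓑') = C. -/
open scoped Classical
noncomputable section

namespace NCHelp

def IsMatch (O C : Finset ℕ) (A : Finset (ℕ × ℕ)) : Prop :=
  (∀ p ∈ A, p.1 < p.2) ∧ A.image Prod.fst = O ∧ A.image Prod.snd = C ∧
  (∀ p ∈ A, ∀ q ∈ A, p.1 = q.1 → p = q) ∧ (∀ p ∈ A, ∀ q ∈ A, p.2 = q.2 → p = q)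

def NoCross (A : Finset (ℕ × ℕ)) : Prop :=
  ∀ p ∈ A, ∀ q ∈ A, ¬(p.1 < q.1 ∧ q.1 < p.2 ∧ p.2 < q.2)

def NoNest (A : Finset (ℕ × ℕ)) : Prop :=
  ∀ p ∈ A, ∀ q ∈ A, ¬(p.1 < q.1 ∧ q.1 < q.2 ∧ q.2 < p.2)

def Dom (O C : Finset ℕ) : Prop :=
  O.card = C.card ∧ ∀ t : ℕ, (C.filter (· ≤ t)).card ≤ (O.filter (· < t)).card

lemma card_match {O C A} (h : IsMatch O C A) : A.card = C.card := by
  obtain ⟨-, -, hC, -, h2⟩ := h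
  rw [← hC]
  exact (Finset.card_image_of_injOn (fun p hp q hq hpq => h2 p hp q hq hpq)).symm

lemma match_empty {O C A} (h : IsMatch O C A) (hC : C = ∅) : A = ∅ ∧ O = ∅ := by
  have hA : A = ∅ := by
    rw [← Finset.card_eq_zero, card_match h, hC, Finset.card_empty]
  refine ⟨hA, ?_⟩
  rw [← h.2.1, hA, Finset.image_empty]

/-- Erasing one opener/closer pair preserves dominance. -/
lemma dom_erase {O C : Finset ℕ} (hd : Dom O C) {o c : ℕ} (hoO : o ∈ O) (hcC : c ∈ C)
    (hoc : o < c) (hcmin : ∀ x ∈ C, c ≤ x) :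
    Dom (O.erase o) (C.erase c) := by
  constructor
  · rw [Finset.card_erase_of_mem hoO, Finset.card_erase_of_mem hcC, hd.1]
  · intro t
    rw [Finset.filter_erase, Finset.filter_erase]
    by_cases hct : c ≤ t
    · have hot : o < t := lt_of_lt_of_le hoc hct
      have e1 : ((C.filter (· ≤ t)).erase c).card = (C.filter (· ≤ t)).card - 1 :=
        Finset.card_erase_of_mem (Finset.mem_filter.2 ⟨hcC, hct⟩)
      have e2 : ((O.filter (· < t)).erase o).card = (O.filter (· < t)).card - 1 :=
        Finset.card_erase_of_mem (Finset.mem_filter.2 ⟨hoO, hot⟩)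
      have := hd.2 t
      omega
    · have : C.filter (· ≤ t) = ∅ := by
        apply Finset.filter_eq_empty_iff.2
        intro x hx hxt
        exact hct (le_trans (hcmin x hx) hxt)
      rw [this]
      simp

/-- In a non-crossing matching, the arc ending at the minimal closer starts at the
largest opener below it. -/
lemma key_arc_noCross {O C A} (h : IsMatch O C A) (hnc : NoCross A) (hC : C.Nonempty) :
    ∃ ho : (O.filter (· < C.min' hC)).Nonempty,
      (((O.filter (· < C.min' hC)).max' ho), C.min' hC) ∈ A := by
  obtain ⟨hinc, hO, hCim, hf, hs⟩ := h
  set c := C.min' hC with hc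
  have hcA : ∃ p ∈ A, p.2 = c := by
    have : c ∈ A.image Prod.snd := hCim ▸ C.min'_mem hC
    simpa using this
  obtain ⟨p, hpA, hp2⟩ := hcA
  have hp1O : p.1 ∈ O := by rw [← hO]; exact Finset.mem_image_of_mem _ hpA
  have hp1c : p.1 < c := hp2 ▸ hinc p hpA
  have hpf : p.1 ∈ O.filter (· < c) := Finset.mem_filter.2 ⟨hp1O, hp1c⟩
  have hne : (O.filter (· < c)).Nonempty := ⟨p.1, hpf⟩
  refine ⟨hne, ?_⟩
  set o := (O.filter (· < c)).max' hne with ho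
  have hoO : o ∈ O ∧ o < c := by
    have := (O.filter (· < c)).max'_mem hne
    exact Finset.mem_filter.1 this
  have hqA : ∃ q ∈ A, q.1 = o := by
    have : o ∈ A.image Prod.fst := hO ▸ hoO.1
    simpa using this
  obtain ⟨q, hqA, hq1⟩ := hqA
  have hle : p.1 ≤ o := Finset.le_max' _ _ hpf
  rcases eq_or_lt_of_le hle with heq | hlt
  · have : p = (o, c) := Prod.ext (heq ▸ rfl) hp2
    exact this ▸ hpA
  · exfalso
    -- q.2 > c
    have hq2C : q.2 ∈ C := by rw [← hCim]; exact Finset.mem_image_of_mem _ hqA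
    have hq2c : c < q.2 := by
      rcases lt_or_eq_of_le (C.min'_le _ hq2C) with h1 | h1
      · exact h1
      · exfalso
        have heq : q = p := hs q hqA p hpA (by rw [hp2, ← h1])
        rw [heq] at hq1
        omega
    exact hnc p hpA q hqA ⟨hq1 ▸ hlt, hq1 ▸ (hp2 ▸ hoO.2), hp2 ▸ hq2c⟩

/-- In a non-nesting matching, the minimal opener is matched to the minimal closer. -/
lemma key_arc_noNest {O C A} (h : IsMatch O C A) (hnn : NoNest A) (hC : C.Nonempty) :
    ∃ hO : O.Nonempty, ((O.min' hO), C.min' hC) ∈ A := by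
  obtain ⟨hinc, hO, hCim, hf, hs⟩ := h
  set c := C.min' hC with hc
  have hcA : ∃ p ∈ A, p.2 = c := by
    have : c ∈ A.image Prod.snd := hCim ▸ C.min'_mem hC
    simpa using this
  obtain ⟨p, hpA, hp2⟩ := hcA
  have hp1O : p.1 ∈ O := by rw [← hO]; exact Finset.mem_image_of_mem _ hpA
  have hOne : O.Nonempty := ⟨p.1, hp1O⟩
  refine ⟨hOne, ?_⟩
  set o := O.min' hOne with ho
  have hle : o ≤ p.1 := O.min'_le _ hp1O
  rcases eq_or_lt_of_le hle with heq | hlt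
  · have : p = (o, c) := Prod.ext heq.symm hp2
    exact this ▸ hpA
  · exfalso
    have hqA : ∃ q ∈ A, q.1 = o := by
      have : o ∈ A.image Prod.fst := hO ▸ O.min'_mem hOne
      simpa using this
    obtain ⟨q, hqA, hq1⟩ := hqA
    have hq2C : q.2 ∈ C := by rw [← hCim]; exact Finset.mem_image_of_mem _ hqA
    have hq2c : c < q.2 := by
      rcases lt_or_eq_of_le (C.min'_le _ hq2C) with h1 | h1
      · exact h1
      · exfalso
        have heq : q = p := hs q hqA p hpA (by rw [hp2, ← h1])
        rw [heq] at hq1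
        omega
    exact hnn q hqA p hpA ⟨hq1 ▸ hlt, hinc p hpA, hp2 ▸ hq2c⟩

/-- Erasing an arc from a matching yields a matching. -/
lemma match_erase {O C A} (h : IsMatch O C A) {p : ℕ × ℕ} (hp : p ∈ A) :
    IsMatch (O.erase p.1) (C.erase p.2) (A.erase p) := by
  obtain ⟨hinc, hO, hC, hf, hs⟩ := h
  refine ⟨fun q hq => hinc q (Finset.mem_of_mem_erase hq), ?_, ?_, ?_, ?_⟩
  · ext x
    simp only [Finset.mem_image, Finset.mem_erase, ← hO]
    constructor
    · rintro ⟨q, ⟨hqp, hqA⟩, rfl⟩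
      exact ⟨fun hx => hqp (hf q hqA p hp hx), q, hqA, rfl⟩
    · rintro ⟨hx, q, hqA, rfl⟩
      exact ⟨q, ⟨fun he => hx (he ▸ rfl), hqA⟩, rfl⟩
  · ext x
    simp only [Finset.mem_image, Finset.mem_erase, ← hC]
    constructor
    · rintro ⟨q, ⟨hqp, hqA⟩, rfl⟩
      exact ⟨fun hx => hqp (hs q hqA p hp hx), q, hqA, rfl⟩
    · rintro ⟨hx, q, hqA, rfl⟩
      exact ⟨q, ⟨fun he => hx (he ▸ rfl), hqA⟩, rfl⟩
  · exact fun a ha b hb => hf a (Finset.mem_of_mem_erase ha) b (Finset.mem_of_mem_erase hb)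
  · exact fun a ha b hb => hs a (Finset.mem_of_mem_erase ha) b (Finset.mem_of_mem_erase hb)

lemma unique_noCross : ∀ m O C A₁ A₂, C.card = m → IsMatch O C A₁ → NoCross A₁ →
    IsMatch O C A₂ → NoCross A₂ → A₁ = A₂ := by
  intro m
  induction m with
  | zero =>
    intro O C A₁ A₂ hm h1 _ h2 _
    rw [(match_empty h1 (Finset.card_eq_zero.1 hm)).1,
      (match_empty h2 (Finset.card_eq_zero.1 hm)).1]
  | succ k ih =>
    intro O C A₁ A₂ hm h1 hnc1 h2 hnc2
    have hC : C.Nonempty := Finset.card_pos.1 (hm ▸ Nat.succ_pos k)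
    obtain ⟨ho1, hk1⟩ := key_arc_noCross h1 hnc1 hC
    obtain ⟨ho2, hk2⟩ := key_arc_noCross h2 hnc2 hC
    set p : ℕ × ℕ := (((O.filter (· < C.min' hC)).max' ho1), C.min' hC) with hp
    have hk2' : p ∈ A₂ := hk2
    have hcard : (C.erase (C.min' hC)).card = k := by
      rw [Finset.card_erase_of_mem (C.min'_mem hC), hm]; rfl
    have := ih (O.erase p.1) (C.erase p.2) (A₁.erase p) (A₂.erase p) hcard
      (match_erase h1 hk1) (fun a ha b hb => hnc1 a (Finset.mem_of_mem_erase ha) b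
        (Finset.mem_of_mem_erase hb))
      (match_erase h2 hk2') (fun a ha b hb => hnc2 a (Finset.mem_of_mem_erase ha) b
        (Finset.mem_of_mem_erase hb))
    have e1 : A₁ = insert p (A₁.erase p) := (Finset.insert_erase hk1).symm
    have e2 : A₂ = insert p (A₂.erase p) := (Finset.insert_erase hk2').symm
    rw [e1, e2, this]

lemma unique_noNest : ∀ m O C A₁ A₂, C.card = m → IsMatch O C A₁ → NoNest A₁ →
    IsMatch O C A₂ → NoNest A₂ → A₁ = A₂ := by
  intro m
  induction m with
  | zero =>
    intro O C A₁ A₂ hm h1 _ h2 _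
    rw [(match_empty h1 (Finset.card_eq_zero.1 hm)).1,
      (match_empty h2 (Finset.card_eq_zero.1 hm)).1]
  | succ k ih =>
    intro O C A₁ A₂ hm h1 hnn1 h2 hnn2
    have hC : C.Nonempty := Finset.card_pos.1 (hm ▸ Nat.succ_pos k)
    obtain ⟨ho1, hk1⟩ := key_arc_noNest h1 hnn1 hC
    obtain ⟨ho2, hk2⟩ := key_arc_noNest h2 hnn2 hC
    have hOeq : O.min' ho1 = O.min' ho2 := rfl
    set p : ℕ × ℕ := ((O.min' ho1), C.min' hC) with hp
    have hk2' : p ∈ A₂ := hk2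
    have hcard : (C.erase (C.min' hC)).card = k := by
      rw [Finset.card_erase_of_mem (C.min'_mem hC), hm]; rfl
    have := ih (O.erase p.1) (C.erase p.2) (A₁.erase p) (A₂.erase p) hcard
      (match_erase h1 hk1) (fun a ha b hb => hnn1 a (Finset.mem_of_mem_erase ha) b
        (Finset.mem_of_mem_erase hb))
      (match_erase h2 hk2') (fun a ha b hb => hnn2 a (Finset.mem_of_mem_erase ha) b
        (Finset.mem_of_mem_erase hb))
    have e1 : A₁ = insert p (A₁.erase p) := (Finset.insert_erase hk1).symm
    have e2 : A₂ = insert p (A₂.erase p) := (Finset.insert_erase hk2').symm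
    rw [e1, e2, this]


lemma min_closer_opener {O C : Finset ℕ} (hd : Dom O C) (hC : C.Nonempty) :
    (O.filter (· < C.min' hC)).Nonempty := by
  set c := C.min' hC with hc
  have h1 : c ∈ C.filter (· ≤ c) := Finset.mem_filter.2 ⟨C.min'_mem hC, le_refl c⟩
  have h2 : 0 < (C.filter (· ≤ c)).card := Finset.card_pos.2 ⟨c, h1⟩
  have := hd.2 c
  have h3 : 0 < (O.filter (· < c)).card := lt_of_lt_of_le h2 this
  exact Finset.card_pos.1 h3

lemma match_insert {O C : Finset ℕ} {A : Finset (ℕ × ℕ)} {o c : ℕ}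
    (h : IsMatch (O.erase o) (C.erase c) A) (hoO : o ∈ O) (hcC : c ∈ C) (hoc : o < c) :
    IsMatch O C (insert (o, c) A) := by
  obtain ⟨hinc, hOi, hCi, hf, hs⟩ := h
  have hno : ∀ p ∈ A, p.1 ≠ o := by
    intro p hp
    have : p.1 ∈ O.erase o := hOi ▸ Finset.mem_image_of_mem _ hp
    exact (Finset.mem_erase.1 this).1
  have hnc : ∀ p ∈ A, p.2 ≠ c := by
    intro p hp
    have : p.2 ∈ C.erase c := hCi ▸ Finset.mem_image_of_mem _ hp
    exact (Finset.mem_erase.1 this).1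
  refine ⟨?_, ?_, ?_, ?_, ?_⟩
  · intro p hp
    rcases Finset.mem_insert.1 hp with rfl | hp
    · exact hoc
    · exact hinc p hp
  · rw [Finset.image_insert, hOi]
    exact Finset.insert_erase hoO
  · rw [Finset.image_insert, hCi]
    exact Finset.insert_erase hcC
  · intro p hp q hq hpq
    rcases Finset.mem_insert.1 hp with rfl | hp <;> rcases Finset.mem_insert.1 hq with rfl | hq
    · rfl
    · exact absurd hpq.symm (hno q hq)
    · exact absurd hpq (hno p hp)
    · exact hf p hp q hq hpq
  · intro p hp q hq hpq
    rcases Finset.mem_insert.1 hp with rfl | hp <;> rcases Finset.mem_insert.1 hq with rfl | hq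
    · rfl
    · exact absurd hpq.symm (hnc q hq)
    · exact absurd hpq (hnc p hp)
    · exact hs p hp q hq hpq

lemma exists_noCross : ∀ m O C, C.card = m → Dom O C →
    ∃ A, IsMatch O C A ∧ NoCross A := by
  intro m
  induction m with
  | zero =>
    intro O C hm hd
    refine ⟨∅, ⟨by simp, ?_, ?_, by simp, by simp⟩, by intro p hp; simp at hp⟩
    · rw [Finset.image_empty]
      symm; rw [← Finset.card_eq_zero, hd.1, hm]
    · rw [Finset.image_empty]
      symm; exact Finset.card_eq_zero.1 hm
  | succ k ih =>
    intro O C hm hd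
    have hC : C.Nonempty := Finset.card_pos.1 (by omega)
    set c := C.min' hC with hc
    have hne := min_closer_opener hd hC
    set o := (O.filter (· < c)).max' hne with ho
    have hof : o ∈ O.filter (· < c) := (O.filter (· < c)).max'_mem hne
    have hoO : o ∈ O := (Finset.mem_filter.1 hof).1
    have hoc : o < c := (Finset.mem_filter.1 hof).2
    have hcmin : ∀ x ∈ C, c ≤ x := fun x hx => C.min'_le x hx
    have hd' := dom_erase hd hoO (C.min'_mem hC) hoc hcmin
    have hcard : (C.erase c).card = k := by
      rw [Finset.card_erase_of_mem (C.min'_mem hC)]; omega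
    obtain ⟨A, hA, hAnc⟩ := ih (O.erase o) (C.erase c) hcard hd'
    refine ⟨insert (o, c) A, match_insert hA hoO (C.min'_mem hC) hoc, ?_⟩
    intro p hp q hq hpat
    have hmemO : ∀ r ∈ A, r.1 ∈ O.erase o := fun r hr =>
      hA.2.1 ▸ Finset.mem_image_of_mem _ hr
    have hmemC : ∀ r ∈ A, r.2 ∈ C.erase c := fun r hr =>
      hA.2.2.1 ▸ Finset.mem_image_of_mem _ hr
    rcases Finset.mem_insert.1 hp with rfl | hp <;> rcases Finset.mem_insert.1 hq with rfl | hq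
    · omega
    · -- p = (o,c), pattern: o < q.1 < c < q.2 : q.1 ∈ O.erase o with q.1 < c, > o contra max
      obtain ⟨h1, h2, h3⟩ := hpat
      have hq1 : q.1 ∈ O.erase o := hmemO q hq
      have h2' : q.1 < c := h2
      have : q.1 ≤ o := Finset.le_max' _ _ (show q.1 ∈ O.filter (· < c) from
        Finset.mem_filter.2 ⟨Finset.mem_of_mem_erase hq1, h2'⟩)
      omega
    · -- q = (o,c), pattern: p.1 < o < p.2 < c : p.2 ∈ C.erase c, p.2 < c contra min
      obtain ⟨h1, h2, h3⟩ := hpat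
      have hq2 : p.2 ∈ C.erase c := hmemC p hp
      have := hcmin p.2 (Finset.mem_of_mem_erase hq2)
      omega
    · exact hAnc p hp q hq hpat

lemma exists_noNest : ∀ m O C, C.card = m → Dom O C →
    ∃ A, IsMatch O C A ∧ NoNest A := by
  intro m
  induction m with
  | zero =>
    intro O C hm hd
    refine ⟨∅, ⟨by simp, ?_, ?_, by simp, by simp⟩, by intro p hp; simp at hp⟩
    · rw [Finset.image_empty]
      symm; rw [← Finset.card_eq_zero, hd.1, hm]
    · rw [Finset.image_empty]
      symm; exact Finset.card_eq_zero.1 hm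
  | succ k ih =>
    intro O C hm hd
    have hC : C.Nonempty := Finset.card_pos.1 (by omega)
    set c := C.min' hC with hc
    have hne := min_closer_opener hd hC
    have hOne : O.Nonempty := by
      obtain ⟨x, hx⟩ := hne
      exact ⟨x, (Finset.mem_filter.1 hx).1⟩
    set o := O.min' hOne with ho
    have hoO : o ∈ O := O.min'_mem hOne
    have hoc : o < c := by
      obtain ⟨x, hx⟩ := hne
      have := O.min'_le x (Finset.mem_filter.1 hx).1
      have := (Finset.mem_filter.1 hx).2
      omega
    have hcmin : ∀ x ∈ C, c ≤ x := fun x hx => C.min'_le x hx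
    have homin : ∀ x ∈ O, o ≤ x := fun x hx => O.min'_le x hx
    have hd' := dom_erase hd hoO (C.min'_mem hC) hoc hcmin
    have hcard : (C.erase c).card = k := by
      rw [Finset.card_erase_of_mem (C.min'_mem hC)]; omega
    obtain ⟨A, hA, hAnn⟩ := ih (O.erase o) (C.erase c) hcard hd'
    refine ⟨insert (o, c) A, match_insert hA hoO (C.min'_mem hC) hoc, ?_⟩
    intro p hp q hq hpat
    have hmemO : ∀ r ∈ A, r.1 ∈ O.erase o := fun r hr =>
      hA.2.1 ▸ Finset.mem_image_of_mem _ hr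
    have hmemC : ∀ r ∈ A, r.2 ∈ C.erase c := fun r hr =>
      hA.2.2.1 ▸ Finset.mem_image_of_mem _ hr
    rcases Finset.mem_insert.1 hp with rfl | hp <;> rcases Finset.mem_insert.1 hq with rfl | hq
    · omega
    · -- p = (o,c) over q : o < q.1 < q.2 < c : q.2 < c contra min
      obtain ⟨h1, h2, h3⟩ := hpat
      have := hcmin q.2 (Finset.mem_of_mem_erase (hmemC q hq))
      omega
    · -- q = (o,c) inside p : p.1 < o contra min
      obtain ⟨h1, h2, h3⟩ := hpat
      have := homin p.1 (Finset.mem_of_mem_erase (hmemO p hp))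
      omega
    · exact hAnn p hp q hq hpat

end NCHelp

namespace NCHelp

variable {n : ℕ}

lemma block_eq_of_mem (P : SetPartitionA n) {B B' : Finset ℕ} (hB : B ∈ P.blocks)
    (hB' : B' ∈ P.blocks) {i : ℕ} (hi : i ∈ B) (hi' : i ∈ B') : B = B' := by
  by_contra h
  exact Finset.disjoint_left.1 (P.disj B hB B' hB' h) hi hi'

lemma mem_Icc_of_mem_block (P : SetPartitionA n) {B : Finset ℕ} {i : ℕ}
    (hB : B ∈ P.blocks) (hi : i ∈ B) : i ∈ Finset.Icc 1 n := (P.cover i).1 ⟨B, hB, hi⟩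

lemma exists_arc_up (P : SetPartitionA n) {B : Finset ℕ} {i j : ℕ} (hB : B ∈ P.blocks)
    (hi : i ∈ B) (hj : j ∈ B) (hij : i < j) : ∃ k ∈ B, P.IsArc i k ∧ k ≤ j := by
  have hjf : j ∈ B.filter (i < ·) := Finset.mem_filter.2 ⟨hj, hij⟩
  have hne : (B.filter (i < ·)).Nonempty := ⟨j, hjf⟩
  set k := (B.filter (i < ·)).min' hne with hk
  have hkf : k ∈ B.filter (i < ·) := Finset.min'_mem _ _
  have hkB : k ∈ B := (Finset.mem_filter.1 hkf).1
  have hik : i < k := (Finset.mem_filter.1 hkf).2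
  refine ⟨k, hkB, ⟨hik, B, hB, hi, hkB, ?_⟩, Finset.min'_le _ _ hjf⟩
  rintro m hm ⟨h1, h2⟩
  have : k ≤ m := Finset.min'_le _ _ (Finset.mem_filter.2 ⟨hm, h1⟩)
  omega

lemma exists_arc_down (P : SetPartitionA n) {B : Finset ℕ} {i j : ℕ} (hB : B ∈ P.blocks)
    (hi : i ∈ B) (hj : j ∈ B) (hij : j < i) : ∃ k ∈ B, P.IsArc k i := by
  have hjf : j ∈ B.filter (· < i) := Finset.mem_filter.2 ⟨hj, hij⟩
  have hne : (B.filter (· < i)).Nonempty := ⟨j, hjf⟩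
  set k := (B.filter (· < i)).max' hne with hk
  have hkf : k ∈ B.filter (· < i) := Finset.max'_mem _ _
  have hkB : k ∈ B := (Finset.mem_filter.1 hkf).1
  have hik : k < i := (Finset.mem_filter.1 hkf).2
  refine ⟨k, hkB, hik, B, hB, hkB, hi, ?_⟩
  rintro m hm ⟨h1, h2⟩
  have : m ≤ k := Finset.le_max' _ _ (show m ∈ B.filter (· < i) from
    Finset.mem_filter.2 ⟨hm, h2⟩)
  omega

lemma arc_unique_fst (P : SetPartitionA n) {i j j' : ℕ} (h : P.IsArc i j)
    (h' : P.IsArc i j') : j = j' := by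
  obtain ⟨hij, B, hB, hiB, hjB, hbet⟩ := h
  obtain ⟨hij', B', hB', hiB', hjB', hbet'⟩ := h'
  have hBB : B = B' := block_eq_of_mem P hB hB' hiB hiB'
  subst hBB
  rcases lt_trichotomy j j' with h1 | h1 | h1
  · exact absurd ⟨hij, h1⟩ (hbet' j hjB)
  · exact h1
  · exact absurd ⟨hij', h1⟩ (hbet j' hjB')

lemma arc_unique_snd (P : SetPartitionA n) {i i' j : ℕ} (h : P.IsArc i j)
    (h' : P.IsArc i' j) : i = i' := by
  obtain ⟨hij, B, hB, hiB, hjB, hbet⟩ := h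
  obtain ⟨hij', B', hB', hiB', hjB', hbet'⟩ := h'
  have hBB : B = B' := block_eq_of_mem P hB hB' hjB hjB'
  subst hBB
  rcases lt_trichotomy i i' with h1 | h1 | h1
  · exact absurd ⟨h1, hij'⟩ (hbet i' hiB')
  · exact h1
  · exact absurd ⟨h1, hij⟩ (hbet' i hiB)

lemma mem_arcs (P : SetPartitionA n) {p : ℕ × ℕ} : p ∈ P.arcs ↔ P.IsArc p.1 p.2 := by
  constructor
  · exact fun h => (Finset.mem_filter.1 h).2
  · intro h
    obtain ⟨hlt, B, hB, hi, hj, -⟩ := id h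
    exact Finset.mem_filter.2 ⟨Finset.mem_product.2
      ⟨mem_Icc_of_mem_block P hB hi, mem_Icc_of_mem_block P hB hj⟩, h⟩

lemma openers_eq (P : SetPartitionA n) : P.openers = P.arcs.image Prod.fst := by
  ext i
  simp only [SetPartitionA.openers, Finset.mem_filter, Finset.mem_image]
  constructor
  · rintro ⟨hIcc, B, hB, hiB, j, hjB, hij⟩
    obtain ⟨k, hkB, hk, -⟩ := exists_arc_up P hB hiB hjB hij
    exact ⟨(i, k), mem_arcs P |>.2 hk, rfl⟩
  · rintro ⟨p, hp, rfl⟩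
    have h := (mem_arcs P).1 hp
    obtain ⟨hlt, B, hB, hi, hj, -⟩ := h
    exact ⟨mem_Icc_of_mem_block P hB hi, B, hB, hi, p.2, hj, hlt⟩

lemma closers_eq (P : SetPartitionA n) : P.closers = P.arcs.image Prod.snd := by
  ext i
  simp only [SetPartitionA.closers, Finset.mem_filter, Finset.mem_image]
  constructor
  · rintro ⟨hIcc, B, hB, hiB, j, hjB, hij⟩
    obtain ⟨k, hkB, hk⟩ := exists_arc_down P hB hiB hjB hij
    exact ⟨(k, i), mem_arcs P |>.2 hk, rfl⟩
  · rintro ⟨p, hp, rfl⟩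
    have h := (mem_arcs P).1 hp
    obtain ⟨hlt, B, hB, hi, hj, -⟩ := h
    exact ⟨mem_Icc_of_mem_block P hB hj, B, hB, hj, p.1, hi, hlt⟩

lemma conn_up (P : SetPartitionA n) {B : Finset ℕ} (hB : B ∈ P.blocks) :
    ∀ d i j, i ∈ B → j ∈ B → i < j → j - i ≤ d →
      Relation.ReflTransGen (fun a b => P.IsArc a b) i j := by
  intro d
  induction d with
  | zero => intro i j _ _ h1 h2; omega
  | succ e ih =>
    intro i j hi hj hij hd
    obtain ⟨k, hkB, hk, hkj⟩ := exists_arc_up P hB hi hj hij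
    rcases eq_or_lt_of_le hkj with rfl | hkj'
    · exact Relation.ReflTransGen.single hk
    · have hik : i < k := hk.1
      exact Relation.ReflTransGen.head hk (ih k j hkB hj hkj' (by omega))

lemma sb_of_conn (P : SetPartitionA n) {i j : ℕ}
    (h : Relation.ReflTransGen (fun a b => P.IsArc a b) i j) :
    i = j ∨ ∃ B ∈ P.blocks, i ∈ B ∧ j ∈ B := by
  induction h with
  | refl => exact Or.inl rfl
  | tail hbc hcd ih =>
    obtain ⟨-, B, hB, hb, hc, -⟩ := hcd
    rcases ih with rfl | ⟨B', hB', hi, hb'⟩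
    · exact Or.inr ⟨B, hB, hb, hc⟩
    · have : B' = B := block_eq_of_mem P hB' hB hb' hb
      exact Or.inr ⟨B, hB, this ▸ hi, hc⟩

def SB (P : SetPartitionA n) (i j : ℕ) : Prop := ∃ B ∈ P.blocks, i ∈ B ∧ j ∈ B

lemma sb_iff (P : SetPartitionA n) {i j : ℕ} : SB P i j ↔ i ∈ Finset.Icc 1 n ∧
    (i = j ∨ Relation.ReflTransGen (fun a b => P.IsArc a b) i j ∨
      Relation.ReflTransGen (fun a b => P.IsArc a b) j i) := by
  constructor
  · rintro ⟨B, hB, hi, hj⟩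
    refine ⟨mem_Icc_of_mem_block P hB hi, ?_⟩
    rcases lt_trichotomy i j with h1 | h1 | h1
    · exact Or.inr (Or.inl (conn_up P hB (j - i) i j hi hj h1 le_rfl))
    · exact Or.inl h1
    · exact Or.inr (Or.inr (conn_up P hB (i - j) j i hj hi h1 le_rfl))
  · rintro ⟨hIcc, rfl | h | h⟩
    · obtain ⟨B, hB, hi⟩ := (P.cover i).2 hIcc
      exact ⟨B, hB, hi, hi⟩
    · rcases sb_of_conn P h with rfl | hs
      · obtain ⟨B, hB, hi⟩ := (P.cover i).2 hIcc
        exact ⟨B, hB, hi, hi⟩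
      · exact hs
    · rcases sb_of_conn P h with heq | ⟨B, hB, hj, hi⟩
      · obtain ⟨B, hB, hi⟩ := (P.cover i).2 hIcc
        exact ⟨B, hB, hi, by rw [heq]; exact hi⟩
      · exact ⟨B, hB, hi, hj⟩

lemma blocks_eq (P : SetPartitionA n) : P.blocks =
    (Finset.Icc 1 n).image (fun i => (Finset.Icc 1 n).filter (fun j => SB P i j)) := by
  ext B
  simp only [Finset.mem_image]
  constructor
  · intro hB
    obtain ⟨i, hi⟩ := P.nonempty B hB
    refine ⟨i, mem_Icc_of_mem_block P hB hi, ?_⟩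
    ext j
    simp only [Finset.mem_filter]
    constructor
    · rintro ⟨hIcc, B', hB', hi', hj'⟩
      rwa [block_eq_of_mem P hB hB' hi hi']
    · intro hj
      exact ⟨mem_Icc_of_mem_block P hB hj, B, hB, hi, hj⟩
  · rintro ⟨i, hIcc, rfl⟩
    obtain ⟨B, hB, hi⟩ := (P.cover i).2 hIcc
    have : (Finset.Icc 1 n).filter (fun j => SB P i j) = B := by
      ext j
      simp only [Finset.mem_filter]
      constructor
      · rintro ⟨hjIcc, B', hB', hi', hj'⟩
        rwa [block_eq_of_mem P hB hB' hi hi']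
      · intro hj
        exact ⟨mem_Icc_of_mem_block P hB hj, B, hB, hi, hj⟩
    rwa [this]

lemma part_ext {P Q : SetPartitionA n} (h : P.blocks = Q.blocks) : P = Q := by
  cases P; cases Q; congr

lemma eq_of_arcs {P Q : SetPartitionA n} (h : P.arcs = Q.arcs) : P = Q := by
  have harc : ∀ i j, P.IsArc i j ↔ Q.IsArc i j := by
    intro i j
    constructor
    · intro hij
      have : (i, j) ∈ P.arcs := (mem_arcs P).2 hij
      exact (mem_arcs Q).1 (h ▸ this)
    · intro hij
      have : (i, j) ∈ Q.arcs := (mem_arcs Q).2 hij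
      exact (mem_arcs P).1 (h ▸ this)
  have hsb : ∀ i j, SB P i j ↔ SB Q i j := by
    intro i j
    rw [sb_iff, sb_iff]
    constructor <;> rintro ⟨h1, h2 | h2 | h2⟩
    · exact ⟨h1, Or.inl h2⟩
    · exact ⟨h1, Or.inr (Or.inl (Relation.ReflTransGen.mono (fun a b => (harc a b).1) _ _ h2))⟩
    · exact ⟨h1, Or.inr (Or.inr (Relation.ReflTransGen.mono (fun a b => (harc a b).1) _ _ h2))⟩
    · exact ⟨h1, Or.inl h2⟩
    · exact ⟨h1, Or.inr (Or.inl (Relation.ReflTransGen.mono (fun a b => (harc a b).2) _ _ h2))⟩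
    · exact ⟨h1, Or.inr (Or.inr (Relation.ReflTransGen.mono (fun a b => (harc a b).2) _ _ h2))⟩
  apply part_ext
  rw [blocks_eq P, blocks_eq Q]
  apply Finset.image_congr
  intro i _
  ext j
  simp only [Finset.mem_filter, hsb]

lemma crossings_eq_zero (P : SetPartitionA n) :
    P.crossings = 0 ↔ ∀ p ∈ P.arcs, ∀ q ∈ P.arcs, ¬(p.1 < q.1 ∧ q.1 < p.2 ∧ p.2 < q.2) := by
  rw [SetPartitionA.crossings, Finset.card_eq_zero, Finset.filter_eq_empty_iff]
  constructor
  · intro h p hp q hq hpat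
    have hm : (p, q) ∈ P.arcs ×ˢ P.arcs := Finset.mem_product.2 ⟨hp, hq⟩
    exact h hm hpat
  · rintro h x hx
    have := Finset.mem_product.1 hx
    exact h x.1 this.1 x.2 this.2

lemma nestings_eq_zero (P : SetPartitionA n) :
    P.nestings = 0 ↔ ∀ p ∈ P.arcs, ∀ q ∈ P.arcs, ¬(p.1 < q.1 ∧ q.1 < q.2 ∧ q.2 < p.2) := by
  rw [SetPartitionA.nestings, Finset.card_eq_zero, Finset.filter_eq_empty_iff]
  constructor
  · intro h p hp q hq hpat
    have hm : (p, q) ∈ P.arcs ×ˢ P.arcs := Finset.mem_product.2 ⟨hp, hq⟩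
    exact h hm hpat
  · rintro h x hx
    have := Finset.mem_product.1 hx
    exact h x.1 this.1 x.2 this.2


/-! ### Building a partition from a functional arc set -/

def prvset (A : Finset (ℕ × ℕ)) (j : ℕ) : Finset ℕ :=
  (A.filter fun p => p.2 = j ∧ p.1 < j).image Prod.fst

def prv (A : Finset (ℕ × ℕ)) (j : ℕ) : ℕ :=
  if h : (prvset A j).Nonempty then (prvset A j).min' h else j

lemma mem_prvset (A : Finset (ℕ × ℕ)) (j x : ℕ) :
    x ∈ prvset A j ↔ ∃ p ∈ A, p.2 = j ∧ p.1 < j ∧ p.1 = x := by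
  simp only [prvset, Finset.mem_image, Finset.mem_filter]
  constructor
  · rintro ⟨p, ⟨h1, h2, h3⟩, h4⟩; exact ⟨p, h1, h2, h3, h4⟩
  · rintro ⟨p, h1, h2, h3, h4⟩; exact ⟨p, ⟨h1, h2, h3⟩, h4⟩

lemma prv_le (A : Finset (ℕ × ℕ)) (j : ℕ) : prv A j ≤ j := by
  rw [prv]
  split
  · next h =>
    obtain ⟨p, -, -, hlt, heq⟩ := (mem_prvset A j _).1 ((prvset A j).min'_mem h)
    omega
  · exact le_refl j

lemma prv_mem (A : Finset (ℕ × ℕ)) (j : ℕ) (h : prv A j < j) : (prv A j, j) ∈ A := by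
  rw [prv] at h ⊢
  split at h
  · next hne =>
    rw [dif_pos hne]
    obtain ⟨p, hpA, hp2, -, heq⟩ := (mem_prvset A j _).1 ((prvset A j).min'_mem hne)
    rw [← heq, ← hp2, Prod.mk.eta]
    exact hpA
  · omega

lemma prv_eq_of {A : Finset (ℕ × ℕ)} (hs : ∀ p ∈ A, ∀ q ∈ A, p.2 = q.2 → p = q)
    {i j : ℕ} (hij : (i, j) ∈ A) (hlt : i < j) : prv A j = i := by
  have hi : i ∈ prvset A j := (mem_prvset A j i).2 ⟨(i, j), hij, rfl, hlt, rfl⟩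
  have hne : (prvset A j).Nonempty := ⟨i, hi⟩
  rw [prv, dif_pos hne]
  obtain ⟨p, hpA, hp2, -, heq⟩ := (mem_prvset A j _).1 ((prvset A j).min'_mem hne)
  have hpij : p = (i, j) := hs p hpA (i, j) hij hp2
  rw [← heq, hpij]

def root (A : Finset (ℕ × ℕ)) : ℕ → ℕ := fun j =>
  if h : prv A j < j then root A (prv A j) else j
termination_by j => j
decreasing_by exact h

lemma root_eq (A : Finset (ℕ × ℕ)) (j : ℕ) :
    root A j = if prv A j < j then root A (prv A j) else j := by
  rw [root]
  split <;> simp_all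

lemma root_le (A : Finset (ℕ × ℕ)) : ∀ j, root A j ≤ j := by
  intro j
  induction j using Nat.strong_induction_on with
  | _ j ih =>
    rw [root_eq]
    split
    · next h => exact le_trans (ih _ h) (le_of_lt h)
    · exact le_refl j

lemma root_arc {A : Finset (ℕ × ℕ)} (hs : ∀ p ∈ A, ∀ q ∈ A, p.2 = q.2 → p = q)
    {i j : ℕ} (hij : (i, j) ∈ A) (hlt : i < j) : root A j = root A i := by
  rw [root_eq, prv_eq_of hs hij hlt, if_pos hlt]

lemma reach_le {A : Finset (ℕ × ℕ)} (hinc : ∀ p ∈ A, p.1 < p.2) {a b : ℕ}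
    (h : Relation.ReflTransGen (fun x y => (x, y) ∈ A) a b) : a ≤ b := by
  induction h with
  | refl => exact le_refl a
  | tail hxy hyz ih => exact le_trans ih (le_of_lt (hinc _ hyz))

lemma reach_root {A : Finset (ℕ × ℕ)} (hinc : ∀ p ∈ A, p.1 < p.2)
    (hs : ∀ p ∈ A, ∀ q ∈ A, p.2 = q.2 → p = q) {a b : ℕ}
    (h : Relation.ReflTransGen (fun x y => (x, y) ∈ A) a b) : root A a = root A b := by
  induction h with
  | refl => rfl
  | tail hxy hyz ih => exact ih.trans (root_arc hs hyz (hinc _ hyz)).symm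

lemma reach_of_root {A : Finset (ℕ × ℕ)} (hinc : ∀ p ∈ A, p.1 < p.2)
    (hf : ∀ p ∈ A, ∀ q ∈ A, p.1 = q.1 → p = q)
    (hs : ∀ p ∈ A, ∀ q ∈ A, p.2 = q.2 → p = q) :
    ∀ b a, root A a = root A b → a ≤ b →
      Relation.ReflTransGen (fun x y => (x, y) ∈ A) a b := by
  intro b
  induction b using Nat.strong_induction_on with
  | _ b ih =>
    intro a hroot hab
    rcases eq_or_lt_of_le hab with rfl | hab'
    · exact Relation.ReflTransGen.refl
    by_cases hpb : prv A b < b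
    · have hpbA : (prv A b, b) ∈ A := prv_mem A b hpb
      set p := prv A b with hp
      have hrootp : root A p = root A b := (root_arc hs hpbA (hinc _ hpbA)).symm
      rcases le_or_gt a p with hap | hpa
      · have : Relation.ReflTransGen (fun x y => (x, y) ∈ A) a p :=
          ih p hpb a (hroot.trans hrootp.symm) hap
        exact this.tail hpbA
      · -- p < a ≤ b, a < b; reach p a, first step must go to b, contra
        have hreach : Relation.ReflTransGen (fun x y => (x, y) ∈ A) p a :=
          ih a hab' p (hrootp.trans hroot.symm) (le_of_lt hpa)
        rcases Relation.ReflTransGen.cases_head hreach with heq | ⟨q, hpq, hqa⟩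
        · omega
        · have : (p, q) = (p, b) := hf (p, q) hpq (p, b) hpbA rfl
          have hqb : q = b := by injection this
          subst hqb
          have := reach_le hinc hqa
          omega
    · -- root A b = b
      have hrb : root A b = b := by rw [root_eq, if_neg hpb]
      have := root_le A a
      omega

/-- The partition generated by a functional arc set. -/
def mkPart (n : ℕ) (A : Finset (ℕ × ℕ)) : SetPartitionA n where
  blocks := (Finset.Icc 1 n).image fun i =>
    (Finset.Icc 1 n).filter fun j => root A j = root A i
  nonempty := by
    intro B hB
    simp only [Finset.mem_image] at hB
    obtain ⟨i, hi, rfl⟩ := hB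
    exact ⟨i, Finset.mem_filter.2 ⟨hi, rfl⟩⟩
  disj := by
    intro B hB B' hB' hne
    simp only [Finset.mem_image] at hB hB'
    obtain ⟨i, hi, rfl⟩ := hB
    obtain ⟨i', hi', rfl⟩ := hB'
    rw [Finset.disjoint_left]
    intro k hk hk'
    have h1 := (Finset.mem_filter.1 hk).2
    have h2 := (Finset.mem_filter.1 hk').2
    apply hne
    have : root A i = root A i' := by rw [← h1, h2]
    ext j
    simp only [Finset.mem_filter, this]
  cover := by
    intro i
    constructor
    · rintro ⟨B, hB, hi⟩
      simp only [Finset.mem_image] at hB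
      obtain ⟨k, hk, rfl⟩ := hB
      exact (Finset.mem_filter.1 hi).1
    · intro hi
      exact ⟨_, Finset.mem_image_of_mem _ hi, Finset.mem_filter.2 ⟨hi, rfl⟩⟩

lemma mem_mkPart_block {n : ℕ} {A : Finset (ℕ × ℕ)} {i j : ℕ} (hi : i ∈ Finset.Icc 1 n) :
    j ∈ (Finset.Icc 1 n).filter (fun j => root A j = root A i) ↔
      j ∈ Finset.Icc 1 n ∧ root A j = root A i := Finset.mem_filter

lemma mkPart_arcs {n : ℕ} {A : Finset (ℕ × ℕ)} (hinc : ∀ p ∈ A, p.1 < p.2)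
    (hmem : ∀ p ∈ A, p.1 ∈ Finset.Icc 1 n ∧ p.2 ∈ Finset.Icc 1 n)
    (hf : ∀ p ∈ A, ∀ q ∈ A, p.1 = q.1 → p = q)
    (hs : ∀ p ∈ A, ∀ q ∈ A, p.2 = q.2 → p = q) :
    (mkPart n A).arcs = A := by
  ext p
  rw [mem_arcs]
  constructor
  · rintro ⟨hlt, B, hB, hiB, hjB, hbet⟩
    simp only [mkPart, Finset.mem_image] at hB
    obtain ⟨m, hm, rfl⟩ := hB
    have h1 := (Finset.mem_filter.1 hiB).2
    have h2 := (Finset.mem_filter.1 hjB).2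
    have hroot : root A p.1 = root A p.2 := by rw [h1, h2]
    have hreach := reach_of_root hinc hf hs p.2 p.1 hroot (le_of_lt hlt)
    rcases Relation.ReflTransGen.cases_head hreach with heq | ⟨q, hpq, hq2⟩
    · omega
    · have hq1 : p.1 < q := hinc _ hpq
      have hq2' : q ≤ p.2 := reach_le hinc hq2
      have hqB : q ∈ (Finset.Icc 1 n).filter (fun j => root A j = root A m) := by
        refine Finset.mem_filter.2 ⟨(hmem _ hpq).2, ?_⟩
        rw [root_arc hs hpq hq1]
        exact h1
      have := hbet q hqB
      have hqeq : q = p.2 := by omega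
      subst hqeq
      rwa [← Prod.mk.eta (p := p)]
  · intro hp
    have hp' : (p.1, p.2) ∈ A := by rwa [Prod.mk.eta]
    have hlt := hinc p hp
    refine ⟨hlt, (Finset.Icc 1 n).filter (fun j => root A j = root A p.1), ?_, ?_, ?_, ?_⟩
    · exact Finset.mem_image_of_mem _ (hmem p hp).1
    · exact Finset.mem_filter.2 ⟨(hmem p hp).1, rfl⟩
    · exact Finset.mem_filter.2 ⟨(hmem p hp).2, root_arc hs hp' hlt⟩
    · rintro k hk ⟨hk1, hk2⟩
      have hroot := (Finset.mem_filter.1 hk).2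
      have hreach := reach_of_root hinc hf hs k p.1 hroot.symm (le_of_lt hk1)
      rcases Relation.ReflTransGen.cases_head hreach with heq | ⟨q, hpq, hqk⟩
      · omega
      · have : (p.1, q) = (p.1, p.2) := hf _ hpq _ hp' rfl
        have hq : q = p.2 := by injection this
        subst hq
        have := reach_le hinc hqk
        omega

end NCHelp

theorem stmt2 (n : ℕ) (hn : 0 < n) (O C : Finset ℕ)
    (hO : O ⊆ Finset.Icc 1 n) (hC : C ⊆ Finset.Icc 1 n)
    (hcard : O.card = C.card)
    (hdom : ∀ k : ℕ, k < n → (C ∩ Finset.Icc 1 (k + 1)).card ≤ (O ∩ Finset.Icc 1 k).card) :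
    (∃! P : SetPartitionA n, P.crossings = 0 ∧ P.openers = O ∧ P.closers = C) ∧
    (∃! P : SetPartitionA n, P.nestings = 0 ∧ P.openers = O ∧ P.closers = C) := by
  have hdom' : NCHelp.Dom O C := by
    refine ⟨hcard, ?_⟩
    intro t
    rcases Nat.eq_zero_or_pos t with rfl | ht
    · have he : C.filter (· ≤ 0) = ∅ := Finset.filter_eq_empty_iff.2 (fun x hx hx0 => by
        have := (Finset.mem_Icc.1 (hC hx)).1; omega)
      rw [he]
      simp
    by_cases htn : t ≤ n
    · have hk := hdom (t - 1) (by omega)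
      have e1 : C ∩ Finset.Icc 1 (t - 1 + 1) = C.filter (· ≤ t) := by
        ext x
        simp only [Finset.mem_inter, Finset.mem_filter, Finset.mem_Icc]
        constructor
        · rintro ⟨h1, h2, h3⟩; exact ⟨h1, by omega⟩
        · rintro ⟨h1, h2⟩
          have := (Finset.mem_Icc.1 (hC h1)).1
          exact ⟨h1, by omega, by omega⟩
      have e2 : O ∩ Finset.Icc 1 (t - 1) = O.filter (· < t) := by
        ext x
        simp only [Finset.mem_inter, Finset.mem_filter, Finset.mem_Icc]
        constructor
        · rintro ⟨h1, h2, h3⟩; exact ⟨h1, by omega⟩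
        · rintro ⟨h1, h2⟩
          have := (Finset.mem_Icc.1 (hO h1)).1
          exact ⟨h1, by omega, by omega⟩
      rw [← e1, ← e2]
      exact hk
    · have e1 : C.filter (· ≤ t) = C := Finset.filter_true_of_mem (fun x hx => by
        have := (Finset.mem_Icc.1 (hC hx)).2; omega)
      have e2 : O.filter (· < t) = O := Finset.filter_true_of_mem (fun x hx => by
        have := (Finset.mem_Icc.1 (hO hx)).2; omega)
      rw [e1, e2, hcard]
  have hmatch : ∀ Q : SetPartitionA n, Q.openers = O → Q.closers = C →
      NCHelp.IsMatch O C Q.arcs := by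
    intro Q hQO hQC
    refine ⟨fun p hp => ((NCHelp.mem_arcs Q).1 hp).1, ?_, ?_, ?_, ?_⟩
    · rw [← hQO, NCHelp.openers_eq Q]
    · rw [← hQC, NCHelp.closers_eq Q]
    · intro p hp q hq hpq
      have h1 := (NCHelp.mem_arcs Q).1 hp
      have h2 := (NCHelp.mem_arcs Q).1 hq
      rw [hpq] at h1
      exact Prod.ext hpq (NCHelp.arc_unique_fst Q h1 h2)
    · intro p hp q hq hpq
      have h1 := (NCHelp.mem_arcs Q).1 hp
      have h2 := (NCHelp.mem_arcs Q).1 hq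
      rw [hpq] at h1
      exact Prod.ext (NCHelp.arc_unique_snd Q h1 h2) hpq
  constructor
  · obtain ⟨A, hAm, hAnc⟩ := NCHelp.exists_noCross C.card O C rfl hdom'
    have hmem : ∀ p ∈ A, p.1 ∈ Finset.Icc 1 n ∧ p.2 ∈ Finset.Icc 1 n := by
      intro p hp
      exact ⟨hO (hAm.2.1 ▸ Finset.mem_image_of_mem Prod.fst hp),
        hC (hAm.2.2.1 ▸ Finset.mem_image_of_mem Prod.snd hp)⟩
    have harcs : (NCHelp.mkPart n A).arcs = A :=
      NCHelp.mkPart_arcs hAm.1 hmem hAm.2.2.2.1 hAm.2.2.2.2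
    refine ⟨NCHelp.mkPart n A, ⟨?_, ?_, ?_⟩, ?_⟩
    · apply (NCHelp.crossings_eq_zero _).2
      rw [harcs]
      exact hAnc
    · rw [NCHelp.openers_eq, harcs, hAm.2.1]
    · rw [NCHelp.closers_eq, harcs, hAm.2.2.1]
    · rintro Q ⟨hq0, hqO, hqC⟩
      have hQm := hmatch Q hqO hqC
      have hQnc : NCHelp.NoCross Q.arcs := (NCHelp.crossings_eq_zero Q).1 hq0
      have heq := NCHelp.unique_noCross C.card O C Q.arcs A rfl hQm hQnc hAm hAnc
      exact NCHelp.eq_of_arcs (heq.trans harcs.symm)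
  · obtain ⟨A, hAm, hAnn⟩ := NCHelp.exists_noNest C.card O C rfl hdom'
    have hmem : ∀ p ∈ A, p.1 ∈ Finset.Icc 1 n ∧ p.2 ∈ Finset.Icc 1 n := by
      intro p hp
      exact ⟨hO (hAm.2.1 ▸ Finset.mem_image_of_mem Prod.fst hp),
        hC (hAm.2.2.1 ▸ Finset.mem_image_of_mem Prod.snd hp)⟩
    have harcs : (NCHelp.mkPart n A).arcs = A :=
      NCHelp.mkPart_arcs hAm.1 hmem hAm.2.2.2.1 hAm.2.2.2.2
    refine ⟨NCHelp.mkPart n A, ⟨?_, ?_, ?_⟩, ?_⟩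
    · apply (NCHelp.nestings_eq_zero _).2
      rw [harcs]
      exact hAnn
    · rw [NCHelp.openers_eq, harcs, hAm.2.1]
    · rw [NCHelp.closers_eq, harcs, hAm.2.2.1]
    · rintro Q ⟨hq0, hqO, hqC⟩
      have hQm := hmatch Q hqO hqC
      have hQnn : NCHelp.NoNest Q.arcs := (NCHelp.nestings_eq_zero Q).1 hq0
      have heq := NCHelp.unique_noNest C.card O C Q.arcs A rfl hQm hQnn hAm hAnn
      exact NCHelp.eq_of_arcs (heq.trans harcs.symm)
end
end
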